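/- arXiv:2301.08650 — 7 statements merged into one kernel-verified Lean document; each statement's English description precedes it below -/
import Mathlib

section
/- Let C be a category, L : Psh(C) → Psh(C) a reflective localization of the presheaf category (of spaces, or of sets for a 1-categorical version) such that every representable presheaf is L-local, and let N ⊆ Psh(C) be a full subcategory containing the representables and such that L(N) is representable for every N ∈ N. Writing i : C → N for the corestricted Yoneda embedding and ℓ : N → C for the restriction of L, the natural transformation β : i^* → ℓ_! of functors Psh(N) → Psh(C), induced by the unit of the adjunction ℓ_! ⊣ ℓ^*, is an L-local equivalence (i.e. L(β) is an equivalence), where i^* is restriction along i and ℓ_! is left Kan extension along ℓ. -/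
open CategoryTheory CategoryTheory.Limits

noncomputable section

set_option linter.unusedSectionVars false


lemma density_isIso {E : Type} [SmallCategory E] {D : Type 1} [Category.{0} D]
    [HasColimits D]
    {L₁ L₂ : (Eᵒᵖ ⥤ Type) ⥤ D} [PreservesColimitsOfSize.{0,0} L₁]
    [PreservesColimitsOfSize.{0,0} L₂]
    (φ : L₁ ⟶ L₂) (h : ∀ N : E, IsIso (φ.app (yoneda.obj N))) : IsIso φ := by
  haveI : ∀ N : E, IsIso ((Functor.whiskerLeft uliftYoneda.{0} φ).app N) := fun N => by
    let e : uliftYoneda.{0}.obj N ≅ yoneda.obj N := uliftYonedaIsoYoneda.{0}.app N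
    have := h N
    have hh : φ.app (uliftYoneda.{0}.obj N) =
        L₁.map e.hom ≫ φ.app (yoneda.obj N) ≫ L₂.map e.inv := by
      rw [φ.naturality_assoc, ← L₂.map_comp, e.hom_inv_id, L₂.map_id, Category.comp_id]
    simp only [Functor.whiskerLeft_app]
    rw [hh]
    infer_instance
  haveI : IsIso (Functor.whiskerLeft uliftYoneda.{0} φ) := NatIso.isIso_of_isIso_app _
  haveI h1 : uliftYoneda.{0}.HasPointwiseLeftKanExtension (uliftYoneda.{0} ⋙ L₁) :=
    fun Y => inferInstance
  haveI k₁ : L₁.IsLeftKanExtension (𝟙 (uliftYoneda.{0} ⋙ L₁)) := inferInstance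
  haveI k₂ : L₂.IsLeftKanExtension (asIso (Functor.whiskerLeft uliftYoneda.{0} φ)).hom :=
    Presheaf.isLeftKanExtension_of_preservesColimits L₂
      (asIso (Functor.whiskerLeft uliftYoneda.{0} φ))
  haveI k₂' : L₂.IsLeftKanExtension (Functor.whiskerLeft uliftYoneda.{0} φ) := by
    simpa using k₂
  exact (Functor.isLeftKanExtension_iff_isIso φ (𝟙 (uliftYoneda.{0} ⋙ L₁))
    (Functor.whiskerLeft uliftYoneda.{0} φ)
    (Category.id_comp _)).mp k₂'

section main

variable {C : Type} [SmallCategory C] {D : Type 1} [Category.{0} D]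
    (ι : D ⥤ (Cᵒᵖ ⥤ Type)) [Reflective ι]
    {E : Type} [SmallCategory E] (ιN : E ⥤ (Cᵒᵖ ⥤ Type)) [ιN.Full] [ιN.Faithful]
    (i : C ⥤ E) (hi : i ⋙ ιN ≅ yoneda)
    (ℓ : E ⥤ C) (hℓ : ιN ⋙ (reflector ι ⋙ ι) ≅ ℓ ⋙ yoneda)
    (e₀ : i ⋙ ℓ ≅ 𝟭 C)

/-- Δ : ιN ⟶ ℓ ⋙ yoneda, unit followed by hℓ. -/
def deltaTrans : ιN ⟶ ℓ ⋙ yoneda :=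
  ιN.rightUnitor.inv ≫ Functor.whiskerLeft ιN (reflectorAdjunction ι).unit ≫ hℓ.hom

lemma deltaTrans_app (N : E) :
    (deltaTrans ι ιN ℓ hℓ).app N =
      (reflectorAdjunction ι).unit.app (ιN.obj N) ≫ hℓ.hom.app N := by
  simp [deltaTrans]

include hi in
lemma unit_app_iN_isIso (hlocal : ∀ c : C, IsIso ((reflectorAdjunction ι).unit.app (yoneda.obj c)))
    (c : C) : IsIso ((reflectorAdjunction ι).unit.app (ιN.obj (i.obj c))) := by
  have nat := (reflectorAdjunction ι).unit.naturality (hi.inv.app c)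
  simp only [Functor.id_obj, Functor.id_map] at nat
  have : (reflectorAdjunction ι).unit.app (ιN.obj (i.obj c)) =
      hi.hom.app c ≫ (reflectorAdjunction ι).unit.app (yoneda.obj c) ≫
        (reflector ι ⋙ ι).map (hi.inv.app c) := by
    rw [← nat, ← Category.assoc, Iso.hom_inv_id_app, Category.id_comp]; rfl
  rw [this]
  haveI := hlocal c
  infer_instance

include hi in
lemma delta_app_i_isIso (hlocal : ∀ c : C, IsIso ((reflectorAdjunction ι).unit.app (yoneda.obj c)))
    (c : C) : IsIso ((deltaTrans ι ιN ℓ hℓ).app (i.obj c)) := by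
  rw [deltaTrans_app]
  haveI := unit_app_iN_isIso ι ιN i hi hlocal c
  infer_instance


variable (hlocal : ∀ c : C, IsIso ((reflectorAdjunction ι).unit.app (yoneda.obj c)))

/-- the tautological element -/
def xiElem (c : C) : (ιN.obj (i.obj c)).obj (Opposite.op c) :=
  haveI := delta_app_i_isIso ι ιN i hi ℓ hℓ hlocal c
  (inv ((deltaTrans ι ιN ℓ hℓ).app (i.obj c))).app (Opposite.op c) (e₀.inv.app c)

lemma xiElem_spec (c : C) :
    ((deltaTrans ι ιN ℓ hℓ).app (i.obj c)).app (Opposite.op c)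
      (xiElem ι ιN i hi ℓ hℓ e₀ hlocal c) = e₀.inv.app c := by
  haveI := delta_app_i_isIso ι ιN i hi ℓ hℓ hlocal c
  simp only [xiElem]
  rw [← types_comp_apply ((inv ((deltaTrans ι ιN ℓ hℓ).app (i.obj c))).app (Opposite.op c))
      (((deltaTrans ι ιN ℓ hℓ).app (i.obj c)).app (Opposite.op c)) (e₀.inv.app c),
    ← NatTrans.comp_app, IsIso.inv_hom_id]
  simp

lemma xiElem_nat {c c' : C} (v : c' ⟶ c) :
    (ιN.obj (i.obj c)).map v.op (xiElem ι ιN i hi ℓ hℓ e₀ hlocal c) =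
      (ιN.map (i.map v)).app (Opposite.op c') (xiElem ι ιN i hi ℓ hℓ e₀ hlocal c') := by
  haveI := delta_app_i_isIso ι ιN i hi ℓ hℓ hlocal c
  have inj : Function.Injective
      (((deltaTrans ι ιN ℓ hℓ).app (i.obj c)).app (Opposite.op c')) :=
    ((isIso_iff_bijective _).mp inferInstance).injective
  apply inj
  have h1 := types_congr_hom (((deltaTrans ι ιN ℓ hℓ).app (i.obj c)).naturality v.op)
    (xiElem ι ιN i hi ℓ hℓ e₀ hlocal c)
  have h2 := types_congr_hom (congr_app ((deltaTrans ι ιN ℓ hℓ).naturality (i.map v)) (Opposite.op c'))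
    (xiElem ι ιN i hi ℓ hℓ e₀ hlocal c')
  simp only [types_comp_apply, NatTrans.comp_app] at h1 h2
  rw [h1, h2, xiElem_spec, xiElem_spec]
  have h4 := e₀.inv.naturality v
  simp only [Functor.id_obj, Functor.id_map, Functor.comp_obj, Functor.comp_map] at h4
  simpa using h4

/-- the comparison map P_N -/
def pTrans (N : E) : (i.op ⋙ yoneda.obj N) ⟶ ιN.obj N where
  app c := TypeCat.ofHom fun f => (ιN.map f).app c (xiElem ι ιN i hi ℓ hℓ e₀ hlocal c.unop)
  naturality c c' v := by
    ext f
    have h1 := types_congr_hom ((ιN.map f).naturality v) (xiElem ι ιN i hi ℓ hℓ e₀ hlocal c.unop)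
    have h2 := xiElem_nat ι ιN i hi ℓ hℓ e₀ hlocal v.unop
    simp only [Quiver.Hom.op_unop, Opposite.op_unop] at h2
    simp only [types_comp_apply, TypeCat.Fun.toFun_apply, TypeCat.ofHom_apply] at h1 ⊢
    simp only [Functor.op_obj, Opposite.unop_op] at h1
    rw [← h1, h2]
    have h3 := types_congr_hom (congr_app (ιN.map_comp (i.map v.unop) f) c')
      (xiElem ι ιN i hi ℓ hℓ e₀ hlocal c'.unop)
    simp only [NatTrans.comp_app, types_comp_apply] at h3
    rw [← h3]
    simp


lemma pTrans_isIso (N : E) : IsIso (pTrans ι ιN i hi ℓ hℓ e₀ hlocal N) := by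
  haveI : ∀ (c : Cᵒᵖ), IsIso ((pTrans ι ιN i hi ℓ hℓ e₀ hlocal N).app c) := by
    intro c
    rw [isIso_iff_bijective]
    set x : yoneda.obj c.unop ⟶ ιN.obj (i.obj c.unop) :=
      yonedaEquiv.symm (xiElem ι ιN i hi ℓ hℓ e₀ hlocal c.unop) with hxdef
    haveI : IsIso x := by
      haveI := delta_app_i_isIso ι ιN i hi ℓ hℓ hlocal c.unop
      have hx : x = yoneda.map (e₀.inv.app c.unop) ≫
          inv ((deltaTrans ι ιN ℓ hℓ).app (i.obj c.unop)) := by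
        apply yonedaEquiv.injective
        rw [hxdef, Equiv.apply_symm_apply, yonedaEquiv_comp, yonedaEquiv_yoneda_map]
        simp [xiElem]
      rw [hx]
      infer_instance
    have heq : ((pTrans ι ιN i hi ℓ hℓ e₀ hlocal N).app c : _ → _) =
        fun f => yonedaEquiv (x ≫ ιN.map f) := by
      funext f
      rw [yonedaEquiv_comp, hxdef, Equiv.apply_symm_apply]
      rfl
    rw [heq]
    exact ((Functor.FullyFaithful.ofFullyFaithful ιN).homEquiv.trans
      (((asIso x).symm.homFromEquiv).trans yonedaEquiv)).bijective
  exact NatIso.isIso_of_isIso_app _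

lemma key_factor (N : E) :
    Functor.whiskerLeft i.op (yonedaMap ℓ N) ≫
      (Functor.isoWhiskerRight (NatIso.op e₀) (yoneda.obj (ℓ.obj N))).inv ≫
      (Functor.leftUnitor (yoneda.obj (ℓ.obj N))).hom
    = pTrans ι ιN i hi ℓ hℓ e₀ hlocal N ≫ (deltaTrans ι ιN ℓ hℓ).app N := by
  ext c f
  have h1 := types_congr_hom (congr_app ((deltaTrans ι ιN ℓ hℓ).naturality f) c)
    (xiElem ι ιN i hi ℓ hℓ e₀ hlocal c.unop)
  simp only [NatTrans.comp_app, types_comp_apply, Functor.op_obj, Opposite.unop_op] at h1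
  have spec := xiElem_spec ι ιN i hi ℓ hℓ e₀ hlocal c.unop
  simp only [Opposite.op_unop] at spec
  show (yoneda.obj (ℓ.obj N)).map ((e₀.inv.app c.unop).op) ((yonedaMap ℓ N).app (i.op.obj c) f) =
    ((deltaTrans ι ιN ℓ hℓ).app N).app c ((ιN.map f).app c (xiElem ι ιN i hi ℓ hℓ e₀ hlocal c.unop))
  rw [h1, spec]
  simp
  rfl


/-- exchange lemma -/
lemma exch_helper {P Q : Cᵒᵖ ⥤ Type} (g : P ⟶ Q) :
    Functor.whiskerLeft i.op (Functor.whiskerLeft ℓ.op g) ≫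
      (Functor.isoWhiskerRight (NatIso.op e₀) Q).inv ≫ (Functor.leftUnitor Q).hom =
    ((Functor.isoWhiskerRight (NatIso.op e₀) P).inv ≫ (Functor.leftUnitor P).hom) ≫ g := by
  ext c x
  exact (types_congr_hom (g.naturality ((e₀.inv.app c.unop).op)) x).symm

include hi hℓ hlocal in
lemma crux (N : E) : IsIso ((reflector ι).map
    (Functor.whiskerLeft i.op ((ℓ.op.lanAdjunction Type).unit.app (yoneda.obj N)) ≫
      (Functor.isoWhiskerRight (NatIso.op e₀) (ℓ.op.lan.obj (yoneda.obj N))).inv ≫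
      (Functor.leftUnitor (ℓ.op.lan.obj (yoneda.obj N))).hom)) := by
  have hdesc : (Functor.leftKanExtensionUnique (yoneda.obj (ℓ.obj N)) (yonedaMap ℓ N)
          (ℓ.op.lan.obj (yoneda.obj N)) (ℓ.op.lanUnit.app (yoneda.obj N))).hom =
      (yoneda.obj (ℓ.obj N)).descOfIsLeftKanExtension (yonedaMap ℓ N)
        (ℓ.op.lan.obj (yoneda.obj N)) (𝟙 _ ≫ ℓ.op.lanUnit.app (yoneda.obj N)) := rfl
  have fac : yonedaMap ℓ N ≫
      Functor.whiskerLeft ℓ.op ((Functor.leftKanExtensionUnique (yoneda.obj (ℓ.obj N)) (yonedaMap ℓ N)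
          (ℓ.op.lan.obj (yoneda.obj N)) (ℓ.op.lanUnit.app (yoneda.obj N))).hom)
      = ℓ.op.lanUnit.app (yoneda.obj N) := by
    rw [hdesc]
    exact ((yoneda.obj (ℓ.obj N)).descOfIsLeftKanExtension_fac (yonedaMap ℓ N)
      (ℓ.op.lan.obj (yoneda.obj N)) (𝟙 (yoneda.obj N) ≫ ℓ.op.lanUnit.app (yoneda.obj N))).trans
      (Category.id_comp _)
  have stepA : Functor.whiskerLeft i.op ((ℓ.op.lanAdjunction Type).unit.app (yoneda.obj N)) ≫
      (Functor.isoWhiskerRight (NatIso.op e₀) (ℓ.op.lan.obj (yoneda.obj N))).inv ≫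
      (Functor.leftUnitor (ℓ.op.lan.obj (yoneda.obj N))).hom
    = (pTrans ι ιN i hi ℓ hℓ e₀ hlocal N ≫ (deltaTrans ι ιN ℓ hℓ).app N) ≫
        (Functor.leftKanExtensionUnique (yoneda.obj (ℓ.obj N)) (yonedaMap ℓ N)
          (ℓ.op.lan.obj (yoneda.obj N)) (ℓ.op.lanUnit.app (yoneda.obj N))).hom := by
    rw [Functor.lanAdjunction_unit]
    nth_rw 1 [← fac]
    rw [Functor.whiskerLeft_comp, Category.assoc,
      exch_helper i ℓ e₀]
    rw [← Category.assoc]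
    congr 1
    exact key_factor ι ιN i hi ℓ hℓ e₀ hlocal N
  rw [stepA]
  haveI := pTrans_isIso ι ιN i hi ℓ hℓ e₀ hlocal N
  haveI hΔ : IsIso ((reflector ι).map ((deltaTrans ι ιN ℓ hℓ).app N)) := by
    rw [deltaTrans_app, Functor.map_comp]
    haveI : IsIso ((reflector ι).map ((reflectorAdjunction ι).unit.app (ιN.obj N))) :=
      inferInstance
    infer_instance
  rw [Functor.map_comp, Functor.map_comp]
  infer_instance

/-- the natural transformation β : i^* ⟶ ℓ_! -/
def betaTrans : (Functor.whiskeringLeft Cᵒᵖ Eᵒᵖ Type).obj i.op ⟶ ℓ.op.lan where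
  app P := Functor.whiskerLeft i.op ((ℓ.op.lanAdjunction Type).unit.app P) ≫
      (Functor.isoWhiskerRight (NatIso.op e₀) (ℓ.op.lan.obj P)).inv ≫
      (Functor.leftUnitor (ℓ.op.lan.obj P)).hom
  naturality P Q f := by
    have hu : f ≫ (ℓ.op.lanAdjunction Type).unit.app Q =
        (ℓ.op.lanAdjunction Type).unit.app P ≫ Functor.whiskerLeft ℓ.op (ℓ.op.lan.map f) := by
      simpa using ((ℓ.op.lanAdjunction Type).unit.naturality f)
    calc Functor.whiskerLeft i.op f ≫ (Functor.whiskerLeft i.op ((ℓ.op.lanAdjunction Type).unit.app Q) ≫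
          (Functor.isoWhiskerRight (NatIso.op e₀) (ℓ.op.lan.obj Q)).inv ≫
          (Functor.leftUnitor (ℓ.op.lan.obj Q)).hom)
        = Functor.whiskerLeft i.op (f ≫ (ℓ.op.lanAdjunction Type).unit.app Q) ≫
          (Functor.isoWhiskerRight (NatIso.op e₀) (ℓ.op.lan.obj Q)).inv ≫
          (Functor.leftUnitor (ℓ.op.lan.obj Q)).hom := by
          rw [Functor.whiskerLeft_comp]; simp only [Category.assoc]
      _ = Functor.whiskerLeft i.op ((ℓ.op.lanAdjunction Type).unit.app P) ≫
          (Functor.whiskerLeft i.op (Functor.whiskerLeft ℓ.op (ℓ.op.lan.map f)) ≫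
          (Functor.isoWhiskerRight (NatIso.op e₀) (ℓ.op.lan.obj Q)).inv ≫
          (Functor.leftUnitor (ℓ.op.lan.obj Q)).hom) := by
          rw [hu, Functor.whiskerLeft_comp]; simp only [Category.assoc]
      _ = Functor.whiskerLeft i.op ((ℓ.op.lanAdjunction Type).unit.app P) ≫
          ((Functor.isoWhiskerRight (NatIso.op e₀) (ℓ.op.lan.obj P)).inv ≫
          (Functor.leftUnitor (ℓ.op.lan.obj P)).hom) ≫ ℓ.op.lan.map f := by
          rw [exch_helper i ℓ e₀]
      _ = _ := by simp only [Category.assoc]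

end main


/-- A necklace context (1-categorical, set-valued version): a small category `C`, a
reflective localization `L` of `Psh(C)` (presented by a reflective subcategory
`ι : D ⥤ Psh(C)`) such that all representables are `L`-local, and an (essentially
small) full subcategory `ιN : E ⥤ Psh(C)` containing the representables (via the
corestricted Yoneda embedding `i : C ⥤ E`) such that `L` is representable on `E`
(via `ℓ : E ⥤ C`).  The natural transformation `β : i^* ⟶ ℓ_!`, induced by the unit
of the adjunction `ℓ_! ⊣ ℓ^*`, is an `L`-local equivalence. -/
theorem stmt_3 {C : Type} [SmallCategory C] {D : Type 1} [Category.{0} D]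
    (ι : D ⥤ (Cᵒᵖ ⥤ Type)) [Reflective ι]
    -- all representables are L-local
    (hlocal : ∀ c : C, IsIso ((reflectorAdjunction ι).unit.app (yoneda.obj c)))
    -- the full subcategory 𝒩 ⊆ Psh(C)
    {E : Type} [SmallCategory E] (ιN : E ⥤ (Cᵒᵖ ⥤ Type)) [ιN.Full] [ιN.Faithful]
    -- the corestricted Yoneda embedding i : C ⥤ 𝒩
    (i : C ⥤ E) (hi : i ⋙ ιN ≅ yoneda)
    -- ℓ = L|𝒩 : 𝒩 ⥤ C, i.e. L(N) is representable for N ∈ 𝒩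
    (ℓ : E ⥤ C) (hℓ : ιN ⋙ (reflector ι ⋙ ι) ≅ ℓ ⋙ yoneda)
    (e₀ : i ⋙ ℓ ≅ 𝟭 C) :
    ∀ P : Eᵒᵖ ⥤ Type,
      IsIso ((reflector ι).map
        (Functor.whiskerLeft i.op ((ℓ.op.lanAdjunction Type).unit.app P) ≫
          (Functor.isoWhiskerRight (NatIso.op e₀) (ℓ.op.lan.obj P)).inv ≫
          (Functor.leftUnitor (ℓ.op.lan.obj P)).hom)) := by

  haveI : HasColimits D := hasColimits_of_reflective ι
  haveI p1 : PreservesColimitsOfSize.{0,0} (reflector ι) :=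
    (reflectorAdjunction ι).leftAdjoint_preservesColimits
  haveI p2 : PreservesColimitsOfSize.{0,0} (ℓ.op.lan) :=
    (ℓ.op.lanAdjunction Type).leftAdjoint_preservesColimits
  have φ := Functor.whiskerRight (betaTrans i ℓ e₀) (reflector ι)
  haveI : IsIso (Functor.whiskerRight (betaTrans i ℓ e₀) (reflector ι)) := by
    apply density_isIso
    intro N
    exact crux ι ιN i hi ℓ hℓ e₀ hlocal N
  intro P
  exact inferInstanceAs (IsIso ((Functor.whiskerRight (betaTrans i ℓ e₀) (reflector ι)).app P))

end
end

section
/- In a necklace context (C, L, N), define Q_N : Psh(C) → Psh(C) as the composite ℓ_! ∘ i_*, where i_* is right Kan extension along the corestricted Yoneda embedding i : C → N and ℓ_! is left Kan extension along ℓ = L|_N : N → C. Then there is a canonical natural transformation λ : Id → Q_N which is an L-local equivalence; consequently, for any presheaf X, the canonical map Q_N(X) → L(X) is an equivalence if and only if Q_N(X) is L-local. -/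
open CategoryTheory CategoryTheory.Limits

noncomputable section

open Opposite

set_option linter.unusedSectionVars false

namespace NecklaceAux

variable {C : Type} [SmallCategory C] {D : Type 1} [Category.{0} D]
    (ι : D ⥤ (Cᵒᵖ ⥤ Type)) [Reflective ι]
    {E : Type} [SmallCategory E] (ιN : E ⥤ (Cᵒᵖ ⥤ Type)) [ιN.Full] [ιN.Faithful]
    (i : C ⥤ E) (hi : i ⋙ ιN ≅ yoneda)
    (ℓ : E ⥤ C) (hℓ : ιN ⋙ (reflector ι ⋙ ι) ≅ ℓ ⋙ yoneda)
    (e₀ : i ⋙ ℓ ≅ 𝟭 C)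

/-- precomposition with `i.op`. -/
abbrev Wi : (Eᵒᵖ ⥤ Type) ⥤ (Cᵒᵖ ⥤ Type) := (Functor.whiskeringLeft Cᵒᵖ Eᵒᵖ Type).obj i.op

/-- precomposition with `ℓ.op`. -/
abbrev Wl : (Cᵒᵖ ⥤ Type) ⥤ (Eᵒᵖ ⥤ Type) := (Functor.whiskeringLeft Eᵒᵖ Cᵒᵖ Type).obj ℓ.op

/-- restricted Yoneda along `ιN`. -/
abbrev NF : (Cᵒᵖ ⥤ Type) ⥤ (Eᵒᵖ ⥤ Type) :=
  yoneda ⋙ (Functor.whiskeringLeft Eᵒᵖ (Cᵒᵖ ⥤ Type)ᵒᵖ Type).obj ιN.op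

def eIso : i.op ⋙ ℓ.op ≅ 𝟭 Cᵒᵖ := (NatIso.op e₀).symm

/-- auxiliary: from an element of `(ιN.obj e.unop).obj c` produce a map `i.obj c.unop ⟶ e.unop`. -/
def pre (e : Eᵒᵖ) (c : Cᵒᵖ) (t : (ιN.obj e.unop).obj c) : i.obj c.unop ⟶ e.unop :=
  ιN.preimage ((hi.app c.unop).hom ≫ yonedaEquiv.symm t)

lemma map_pre (e : Eᵒᵖ) (c : Cᵒᵖ) (t : (ιN.obj e.unop).obj c) :
    ιN.map (pre ιN i hi e c t) = (hi.app c.unop).hom ≫ yonedaEquiv.symm t :=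
  ιN.map_preimage _

lemma pre_natural_c (e : Eᵒᵖ) {c c' : Cᵒᵖ} (g : c ⟶ c') (t : (ιN.obj e.unop).obj c) :
    pre ιN i hi e c' ((ιN.obj e.unop).map g t)
      = i.map g.unop ≫ pre ιN i hi e c t := by
  apply ιN.map_injective
  rw [Functor.map_comp, map_pre, map_pre]
  have h1 : (yonedaEquiv.symm ((ιN.obj (unop e)).map g t) : yoneda.obj c'.unop ⟶ ιN.obj e.unop)
      = yoneda.map g.unop ≫ yonedaEquiv.symm t :=
    (yonedaEquiv_symm_naturality_left g.unop (ιN.obj (unop e)) t).symm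
  rw [h1, ← Category.assoc, ← Category.assoc]
  congr 1
  exact (hi.hom.naturality g.unop).symm

lemma pre_natural_e {e e' : Eᵒᵖ} (h : e ⟶ e') (c : Cᵒᵖ) (t : (ιN.obj e'.unop).obj c) :
    pre ιN i hi e c ((ιN.map h.unop).app c t)
      = pre ιN i hi e' c t ≫ h.unop := by
  apply ιN.map_injective
  rw [Functor.map_comp, map_pre, map_pre]
  have h1 : (yonedaEquiv.symm ((ιN.map h.unop).app c t) : yoneda.obj c.unop ⟶ ιN.obj e.unop)
      = yonedaEquiv.symm t ≫ ιN.map h.unop :=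
    (yonedaEquiv_symm_naturality_right c.unop (ιN.map h.unop) t).symm
  rw [h1, Category.assoc]

/-- the forward direction of the hom equivalence. -/
def toN (G : Eᵒᵖ ⥤ Type) (X : Cᵒᵖ ⥤ Type) (φ : (Wi i).obj G ⟶ X) : G ⟶ (NF ιN).obj X where
  app e := TypeCat.ofHom fun s =>
    { app := fun c => TypeCat.ofHom fun t => φ.app c (G.map (pre ιN i hi e c t).op s)
      naturality := by
        intro c c' g
        ext t
        show φ.app c' (G.map (pre ιN i hi e c' ((ιN.obj e.unop).map g t)).op s)
          = X.map g (φ.app c (G.map (pre ιN i hi e c t).op s))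
        rw [pre_natural_c, op_comp, FunctorToTypes.map_comp_apply]
        exact NatTrans.naturality_apply φ g _ }
  naturality := by
    intro e e' h
    ext s : 3
    apply NatTrans.ext
    ext c t
    show φ.app c (G.map (pre ιN i hi e' c t).op (G.map h s))
      = φ.app c (G.map (pre ιN i hi e c ((ιN.map h.unop).app c t)).op s)
    rw [pre_natural_e, op_comp, Quiver.Hom.op_unop, FunctorToTypes.map_comp_apply]

/-- the backward direction of the hom equivalence. -/
def fromN (G : Eᵒᵖ ⥤ Type) (X : Cᵒᵖ ⥤ Type) (ψ : G ⟶ (NF ιN).obj X) : (Wi i).obj G ⟶ X where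
  app c := TypeCat.ofHom fun s => yonedaEquiv ((hi.app c.unop).inv ≫ ψ.app (op (i.obj c.unop)) s)
  naturality := by
    intro c c' g
    ext s
    show yonedaEquiv ((hi.app c'.unop).inv ≫ ψ.app (op (i.obj c'.unop)) (G.map (i.map g.unop).op s))
      = X.map g (yonedaEquiv ((hi.app c.unop).inv ≫ ψ.app (op (i.obj c.unop)) s))
    rw [NatTrans.naturality_apply ψ (i.map g.unop).op s]
    rw [yonedaEquiv_naturality']
    show yonedaEquiv ((hi.app c'.unop).inv ≫ (ιN.map (i.map g.unop) ≫ ψ.app (op (i.obj c.unop)) s))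
      = yonedaEquiv (yoneda.map g.unop ≫ (hi.app c.unop).inv ≫ ψ.app (op (i.obj c.unop)) s)
    rw [← Category.assoc, ← Category.assoc]
    congr 2
    exact (hi.inv.naturality g.unop).symm

def myAdj : Wi i ⊣ NF ιN :=
  Adjunction.mkOfHomEquiv
    { homEquiv := fun G X =>
        { toFun := toN ιN i hi G X
          invFun := fromN ιN i hi G X
          left_inv := by
            intro φ
            apply NatTrans.ext
            ext c s
            show yonedaEquiv ((hi.app c.unop).inv ≫ (toN ιN i hi G X φ).app (op (i.obj c.unop)) s)
              = φ.app c s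
            rw [yonedaEquiv_comp]
            show φ.app (op c.unop)
              (G.map (pre ιN i hi (op (i.obj c.unop)) (op c.unop) (yonedaEquiv (hi.app c.unop).inv)).op s)
              = φ.app c s
            have : pre ιN i hi (op (i.obj c.unop)) (op c.unop) (yonedaEquiv (hi.app c.unop).inv)
                = 𝟙 (i.obj c.unop) := by
              apply ιN.map_injective
              rw [map_pre, Equiv.symm_apply_apply, Iso.hom_inv_id]
              exact (ιN.map_id _).symm
            rw [this]
            show φ.app c (G.map (𝟙 _) s) = φ.app c s
            simp
          right_inv := by
            intro ψ
            apply NatTrans.ext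
            funext e; ext s : 3
            apply NatTrans.ext
            ext c t
            show yonedaEquiv ((hi.app c.unop).inv
                ≫ ψ.app (op (i.obj c.unop)) (G.map (pre ιN i hi e c t).op s))
              = (ψ.app e s).app c t
            rw [NatTrans.naturality_apply ψ (pre ιN i hi e c t).op s]
            show yonedaEquiv ((hi.app c.unop).inv
                ≫ (ιN.map (pre ιN i hi e c t) ≫ ψ.app e s)) = (ψ.app e s).app c t
            rw [map_pre, Category.assoc, ← Category.assoc ((hi.app c.unop).inv), Iso.inv_hom_id,
              Category.id_comp, yonedaEquiv_comp, Equiv.apply_symm_apply] }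
      homEquiv_naturality_left_symm := by intros; rfl
      homEquiv_naturality_right := by intros; rfl }

end NecklaceAux

namespace NecklaceAux

variable {C : Type} [SmallCategory C] {D : Type 1} [Category.{0} D]
    (ι : D ⥤ (Cᵒᵖ ⥤ Type)) [Reflective ι]
    {E : Type} [SmallCategory E] (ιN : E ⥤ (Cᵒᵖ ⥤ Type)) [ιN.Full] [ιN.Faithful]
    (i : C ⥤ E) (hi : i ⋙ ιN ≅ yoneda)
    (ℓ : E ⥤ C) (hℓ : ιN ⋙ (reflector ι ⋙ ι) ≅ ℓ ⋙ yoneda)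
    (e₀ : i ⋙ ℓ ≅ 𝟭 C)

lemma bij_post {𝒞 : Type*} [Category 𝒞] {A B Z : 𝒞} (f : A ⟶ B) [IsIso f] :
    Function.Bijective (fun g : Z ⟶ A => g ≫ f) :=
  ⟨fun a b h => by simpa using (cancel_mono f).mp h, fun y => ⟨y ≫ inv f, by simp⟩⟩

lemma bij_pre {𝒞 : Type*} [Category 𝒞] {A B Z : 𝒞} (f : A ⟶ B) [IsIso f] :
    Function.Bijective (fun g : B ⟶ Z => f ≫ g) :=
  ⟨fun a b h => by simpa using (cancel_epi f).mp h, fun y => ⟨inv f ≫ y, by simp⟩⟩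

lemma counit_app_eq (X : Cᵒᵖ ⥤ Type) :
    (myAdj ιN i hi).counit.app X = fromN ιN i hi ((NF ιN).obj X) X (𝟙 _) := by
  simp [myAdj]

instance counit_app_isIso (X : Cᵒᵖ ⥤ Type) : IsIso ((myAdj ιN i hi).counit.app X) := by
  rw [counit_app_eq]
  have : ∀ c, IsIso ((fromN ιN i hi ((NF ιN).obj X) X (𝟙 _)).app c) := by
    intro c
    rw [isIso_iff_bijective]
    show Function.Bijective
      (fun s : (ιN.obj (i.obj c.unop) ⟶ X) => yonedaEquiv ((hi.app c.unop).inv ≫ s))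
    exact yonedaEquiv.bijective.comp (bij_pre (hi.app c.unop).inv)
  exact NatIso.isIso_of_isIso_app _

instance counit_isIso : IsIso (myAdj ιN i hi).counit :=
  NatIso.isIso_of_isIso_app _

def epsIso : NF ιN ⋙ Wi i ≅ 𝟭 (Cᵒᵖ ⥤ Type) := asIso (myAdj ιN i hi).counit

def gammaIso : Wl ℓ ⋙ Wi i ≅ 𝟭 (Cᵒᵖ ⥤ Type) :=
  NatIso.ofComponents (fun Y => Functor.isoWhiskerRight (eIso i ℓ e₀) Y)
    (by
      intro Y Z f
      apply NatTrans.ext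
      ext c x
      exact (NatTrans.naturality_apply f _ x).symm)

end NecklaceAux

namespace NecklaceAux

variable {C : Type} [SmallCategory C] {D : Type 1} [Category.{0} D]
    (ι : D ⥤ (Cᵒᵖ ⥤ Type)) [Reflective ι]
    {E : Type} [SmallCategory E] (ιN : E ⥤ (Cᵒᵖ ⥤ Type)) [ιN.Full] [ιN.Faithful]
    (i : C ⥤ E) (hi : i ⋙ ιN ≅ yoneda)
    (ℓ : E ⥤ C) (hℓ : ιN ⋙ (reflector ι ⋙ ι) ≅ ℓ ⋙ yoneda)
    (e₀ : i ⋙ ℓ ≅ 𝟭 C)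

/-- component function of the comparison map `NF(ι d) ⟶ Wl(ι d)`. -/
def vAppFun (d : D) (e : Eᵒᵖ) (s : ιN.obj e.unop ⟶ ι.obj d) :
    (ι.obj d).obj (op (ℓ.obj e.unop)) :=
  yonedaEquiv ((hℓ.app e.unop).inv ≫ (reflector ι ⋙ ι).map s
    ≫ ι.map ((reflectorAdjunction ι).counit.app d))

lemma vAppFun_natural_e (d : D) {e e' : Eᵒᵖ} (h : e ⟶ e') (s : ιN.obj e.unop ⟶ ι.obj d) :
    vAppFun ι ιN ℓ hℓ d e' (ιN.map h.unop ≫ s)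
      = (ι.obj d).map (ℓ.map h.unop).op (vAppFun ι ιN ℓ hℓ d e s) := by
  unfold vAppFun
  rw [yonedaEquiv_naturality']
  show yonedaEquiv ((hℓ.app e'.unop).inv ≫ (reflector ι ⋙ ι).map (ιN.map h.unop ≫ s)
      ≫ ι.map ((reflectorAdjunction ι).counit.app d))
    = yonedaEquiv (yoneda.map (ℓ.map h.unop) ≫ (hℓ.app e.unop).inv ≫ (reflector ι ⋙ ι).map s
      ≫ ι.map ((reflectorAdjunction ι).counit.app d))
  congr 1
  rw [Functor.map_comp, Category.assoc]
  rw [← Category.assoc (yoneda.map (ℓ.map h.unop)), ← Category.assoc ((hℓ.app e'.unop).inv)]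
  congr 1
  have := hℓ.inv.naturality h.unop
  -- (ℓ ⋙ yoneda).map h.unop ≫ hℓ.inv.app e.unop = hℓ.inv.app e'.unop ≫ (ιN ⋙ reflector ι ⋙ ι).map h.unop
  exact this.symm

lemma vAppFun_natural_d {d d' : D} (k : d ⟶ d') (e : Eᵒᵖ) (s : ιN.obj e.unop ⟶ ι.obj d) :
    vAppFun ι ιN ℓ hℓ d' e (s ≫ ι.map k)
      = (ι.map k).app (op (ℓ.obj e.unop)) (vAppFun ι ιN ℓ hℓ d e s) := by
  unfold vAppFun
  rw [← yonedaEquiv_comp]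
  congr 1
  rw [Functor.map_comp]
  simp only [Category.assoc]
  have tail : (reflector ι ⋙ ι).map (ι.map k) ≫ ι.map ((reflectorAdjunction ι).counit.app d')
      = ι.map ((reflectorAdjunction ι).counit.app d) ≫ ι.map k := by
    rw [Functor.comp_map, ← ι.map_comp, ← ι.map_comp]
    congr 1
    exact (reflectorAdjunction ι).counit.naturality k
  rw [tail]

/-- the comparison `NF(ι d) ⟶ Wl(ι d)`, natural in `d`. -/
def vD : ι ⋙ NF ιN ⟶ ι ⋙ Wl ℓ where
  app d :=
    { app := fun e => TypeCat.ofHom fun s => vAppFun ι ιN ℓ hℓ d e s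
      naturality := by
        intro e e' h
        ext s
        exact vAppFun_natural_e ι ιN ℓ hℓ d h s }
  naturality := by
    intro d d' k
    apply NatTrans.ext
    ext e s
    exact vAppFun_natural_d ι ιN ℓ hℓ k e s

end NecklaceAux

namespace NecklaceAux

variable {C : Type} [SmallCategory C] {D : Type 1} [Category.{0} D]
    (ι : D ⥤ (Cᵒᵖ ⥤ Type)) [Reflective ι]
    {E : Type} [SmallCategory E] (ιN : E ⥤ (Cᵒᵖ ⥤ Type)) [ιN.Full] [ιN.Faithful]
    (i : C ⥤ E) (hi : i ⋙ ιN ≅ yoneda)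
    (ℓ : E ⥤ C) (hℓ : ιN ⋙ (reflector ι ⋙ ι) ≅ ℓ ⋙ yoneda)
    (e₀ : i ⋙ ℓ ≅ 𝟭 C)

lemma B1_bijective (d : D) (e : Eᵒᵖ) :
    Function.Bijective (fun s : ιN.obj e.unop ⟶ ι.obj d =>
      (reflector ι ⋙ ι).map s ≫ ι.map ((reflectorAdjunction ι).counit.app d)) := by
  have hB : ι.essImage (ι.obj d) := ι.obj_mem_essImage d
  have claim : ∀ s : ιN.obj e.unop ⟶ ι.obj d,
      (reflector ι ⋙ ι).map s ≫ ι.map ((reflectorAdjunction ι).counit.app d)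
        = unitCompPartialBijective (ιN.obj e.unop) hB s := by
    intro s
    have h2 : (unitCompPartialBijective (ιN.obj e.unop) hB).symm
        ((reflector ι ⋙ ι).map s ≫ ι.map ((reflectorAdjunction ι).counit.app d)) = s := by
      rw [unitCompPartialBijective_symm_apply]
      have h3 := (reflectorAdjunction ι).unit.naturality s
      rw [← Category.assoc, ← h3, Functor.id_map, Category.assoc,
        (reflectorAdjunction ι).right_triangle_components d]
      simp
    conv_rhs => rw [← h2]
    rw [Equiv.apply_symm_apply]
  rw [show (fun s : ιN.obj e.unop ⟶ ι.obj d =>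
      (reflector ι ⋙ ι).map s ≫ ι.map ((reflectorAdjunction ι).counit.app d))
    = ⇑(unitCompPartialBijective (ιN.obj e.unop) hB) from funext claim]
  exact (unitCompPartialBijective (ιN.obj e.unop) hB).bijective

instance vD_app_app_isIso (d : D) (e : Eᵒᵖ) : IsIso (((vD ι ιN ℓ hℓ).app d).app e) := by
  rw [isIso_iff_bijective]
  show Function.Bijective (fun s : ιN.obj e.unop ⟶ ι.obj d => vAppFun ι ιN ℓ hℓ d e s)
  have : (fun s : ιN.obj e.unop ⟶ ι.obj d => vAppFun ι ιN ℓ hℓ d e s)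
      = (fun u : yoneda.obj (ℓ.obj e.unop) ⟶ ι.obj d => yonedaEquiv u)
        ∘ (fun u => (hℓ.app e.unop).inv ≫ u)
        ∘ (fun s => (reflector ι ⋙ ι).map s ≫ ι.map ((reflectorAdjunction ι).counit.app d)) :=
    rfl
  rw [this]
  exact (yonedaEquiv.bijective.comp (bij_pre (hℓ.app e.unop).inv)).comp
    (B1_bijective ι ιN d e)

instance vD_app_isIso (d : D) : IsIso ((vD ι ιN ℓ hℓ).app d) :=
  NatIso.isIso_of_isIso_app _

instance vD_isIso : IsIso (vD ι ιN ℓ hℓ) :=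
  NatIso.isIso_of_isIso_app _

def vDIso : ι ⋙ NF ιN ≅ ι ⋙ Wl ℓ := asIso (vD ι ιN ℓ hℓ)

/-- the natural transformation `λ : Id ⟶ Q'` where `Q' = NF ⋙ lan`. -/
def lamQ : 𝟭 (Cᵒᵖ ⥤ Type) ⟶ (NF ιN ⋙ ℓ.op.lan) :=
  (epsIso ιN i hi).inv
    ≫ Functor.whiskerLeft (NF ιN) (Functor.whiskerRight (ℓ.op.lanAdjunction Type).unit (Wi i))
    ≫ Functor.whiskerLeft (NF ιN ⋙ ℓ.op.lan) (gammaIso i ℓ e₀).hom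

lemma lam_comp (X : Cᵒᵖ ⥤ Type) {Y : Cᵒᵖ ⥤ Type} (h : (NF ιN ⋙ ℓ.op.lan).obj X ⟶ Y) :
    (lamQ ιN i hi ℓ e₀).app X ≫ h
      = (epsIso ιN i hi).inv.app X
        ≫ (Wi i).map ((ℓ.op.lanAdjunction Type).homEquiv ((NF ιN).obj X) Y h)
        ≫ (gammaIso i ℓ e₀).hom.app Y := by
  have hγ : (gammaIso i ℓ e₀).hom.app ((NF ιN ⋙ ℓ.op.lan).obj X) ≫ h
      = (Wi i).map ((Wl ℓ).map h) ≫ (gammaIso i ℓ e₀).hom.app Y := by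
    have := (gammaIso i ℓ e₀).hom.naturality h
    simpa using this.symm
  show (epsIso ιN i hi).inv.app X
      ≫ (Wi i).map ((ℓ.op.lanAdjunction Type).unit.app ((NF ιN).obj X))
      ≫ (gammaIso i ℓ e₀).hom.app ((NF ιN ⋙ ℓ.op.lan).obj X) ≫ h = _
  rw [hγ, Adjunction.homEquiv_unit, Functor.map_comp]
  rfl

include hℓ in
lemma lam_post_bijective (X : Cᵒᵖ ⥤ Type) (d : D) :
    Function.Bijective (fun h : (NF ιN ⋙ ℓ.op.lan).obj X ⟶ ι.obj d =>
      (lamQ ιN i hi ℓ e₀).app X ≫ h) := by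
  have key : (fun h : (NF ιN ⋙ ℓ.op.lan).obj X ⟶ ι.obj d =>
      (lamQ ιN i hi ℓ e₀).app X ≫ h)
    = (fun χ : (Wi i).obj ((NF ιN).obj X) ⟶ ι.obj d =>
        (epsIso ιN i hi).inv.app X ≫ χ
          ≫ (inv ((myAdj ιN i hi).counit.app (ι.obj d))
              ≫ (Wi i).map ((vD ι ιN ℓ hℓ).app d) ≫ (gammaIso i ℓ e₀).hom.app (ι.obj d)))
      ∘ (fun ψ : (NF ιN).obj X ⟶ (NF ιN).obj (ι.obj d) =>
          ((myAdj ιN i hi).homEquiv ((NF ιN).obj X) (ι.obj d)).symm ψ)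
      ∘ (fun φ : (NF ιN).obj X ⟶ (Wl ℓ).obj (ι.obj d) => φ ≫ inv ((vD ι ιN ℓ hℓ).app d))
      ∘ (fun h => (ℓ.op.lanAdjunction Type).homEquiv ((NF ιN).obj X) (ι.obj d) h) := by
    funext h
    rw [lam_comp]
    simp only [Function.comp_apply, Adjunction.homEquiv_counit]
    rw [Functor.map_comp]
    simp only [Category.assoc]
    congr 2
    symm
    show (Wi i).map (inv ((vD ι ιN ℓ hℓ).app d))
        ≫ (myAdj ιN i hi).counit.app (ι.obj d)
        ≫ inv ((myAdj ιN i hi).counit.app (ι.obj d))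
        ≫ (Wi i).map ((vD ι ιN ℓ hℓ).app d) ≫ (gammaIso i ℓ e₀).hom.app (ι.obj d)
      = (gammaIso i ℓ e₀).hom.app (ι.obj d)
    rw [IsIso.hom_inv_id_assoc, ← Category.assoc, ← Functor.map_comp, IsIso.inv_hom_id,
      CategoryTheory.Functor.map_id, Category.id_comp]
  rw [key]
  refine Function.Bijective.comp ?_ (Function.Bijective.comp ?_ (Function.Bijective.comp ?_ ?_))
  · exact (bij_pre _).comp (bij_post _)
  · exact (((myAdj ιN i hi).homEquiv _ _).symm).bijective
  · exact bij_post _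
  · exact ((ℓ.op.lanAdjunction Type).homEquiv _ _).bijective

end NecklaceAux

namespace NecklaceAux

variable {C : Type} [SmallCategory C] {D : Type 1} [Category.{0} D]
    (ι : D ⥤ (Cᵒᵖ ⥤ Type)) [Reflective ι]
    {E : Type} [SmallCategory E] (ιN : E ⥤ (Cᵒᵖ ⥤ Type)) [ιN.Full] [ιN.Faithful]
    (i : C ⥤ E) (hi : i ⋙ ιN ≅ yoneda)
    (ℓ : E ⥤ C) (hℓ : ιN ⋙ (reflector ι ⋙ ι) ≅ ℓ ⋙ yoneda)
    (e₀ : i ⋙ ℓ ≅ 𝟭 C)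

include hℓ in
lemma isIso_L_map_lamQ (X : Cᵒᵖ ⥤ Type) :
    IsIso ((reflector ι).map ((lamQ ιN i hi ℓ e₀).app X)) := by
  have key : ∀ d : D, Function.Bijective
      (fun g : (reflector ι).obj ((NF ιN ⋙ ℓ.op.lan).obj X) ⟶ d =>
        (reflector ι).map ((lamQ ιN i hi ℓ e₀).app X) ≫ g) := by
    intro d
    have heq : (fun g : (reflector ι).obj ((NF ιN ⋙ ℓ.op.lan).obj X) ⟶ d =>
        (reflector ι).map ((lamQ ιN i hi ℓ e₀).app X) ≫ g)
      = ((reflectorAdjunction ι).homEquiv X d).symm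
        ∘ (fun h => (lamQ ιN i hi ℓ e₀).app X ≫ h)
        ∘ ((reflectorAdjunction ι).homEquiv ((NF ιN ⋙ ℓ.op.lan).obj X) d) := by
      funext g
      simp only [Function.comp_apply]
      rw [← Adjunction.homEquiv_naturality_left, Equiv.symm_apply_apply]
    rw [heq]
    exact (((reflectorAdjunction ι).homEquiv X d).symm.bijective.comp
      (lam_post_bijective ι ιN i hi ℓ hℓ e₀ X d)).comp
      ((reflectorAdjunction ι).homEquiv _ _).bijective
  obtain ⟨g1, hg1⟩ := (key ((reflector ι).obj X)).2 (𝟙 _)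
  have hg1' : (reflector ι).map ((lamQ ιN i hi ℓ e₀).app X) ≫ g1 = 𝟙 _ := hg1
  have hg2 : g1 ≫ (reflector ι).map ((lamQ ιN i hi ℓ e₀).app X) = 𝟙 _ := by
    apply (key ((reflector ι).obj ((NF ιN ⋙ ℓ.op.lan).obj X))).1
    show (reflector ι).map ((lamQ ιN i hi ℓ e₀).app X)
        ≫ g1 ≫ (reflector ι).map ((lamQ ιN i hi ℓ e₀).app X)
      = (reflector ι).map ((lamQ ιN i hi ℓ e₀).app X) ≫ 𝟙 _
    rw [← Category.assoc, hg1', Category.id_comp, Category.comp_id]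
  exact ⟨g1, hg1', hg2⟩

def BIso : (reflector ι ⋙ ι) ≅ (reflector ι ⋙ ι) :=
  Functor.isoWhiskerLeft (reflector ι ⋙ ι) (epsIso ιN i hi).symm
    ≪≫ Functor.isoWhiskerLeft (reflector ι) (Functor.isoWhiskerRight (vDIso ι ιN ℓ hℓ) (Wi i))
    ≪≫ Functor.isoWhiskerLeft (reflector ι ⋙ ι) (gammaIso i ℓ e₀)

lemma BIso_hom_app (X : Cᵒᵖ ⥤ Type) :
    (BIso ι ιN i hi ℓ hℓ e₀).hom.app X
      = (epsIso ιN i hi).inv.app ((reflector ι ⋙ ι).obj X)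
        ≫ (Wi i).map ((vD ι ιN ℓ hℓ).app ((reflector ι).obj X))
        ≫ (gammaIso i ℓ e₀).hom.app ((reflector ι ⋙ ι).obj X) := by
  simp [BIso, vDIso]

def kappa0 : (NF ιN ⋙ ℓ.op.lan) ⟶ (reflector ι ⋙ ι) :=
  Functor.whiskerRight (Functor.whiskerRight (reflectorAdjunction ι).unit (NF ιN)
      ≫ Functor.whiskerLeft (reflector ι) (vD ι ιN ℓ hℓ)) ℓ.op.lan
    ≫ Functor.whiskerLeft (reflector ι ⋙ ι) (ℓ.op.lanAdjunction Type).counit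

lemma kappa0_app (X : Cᵒᵖ ⥤ Type) :
    (kappa0 ι ιN ℓ hℓ).app X
      = ℓ.op.lan.map ((NF ιN).map ((reflectorAdjunction ι).unit.app X)
          ≫ (vD ι ιN ℓ hℓ).app ((reflector ι).obj X))
        ≫ (ℓ.op.lanAdjunction Type).counit.app (ι.obj ((reflector ι).obj X)) := by
  rfl

lemma lam_kappa0 (X : Cᵒᵖ ⥤ Type) :
    (lamQ ιN i hi ℓ e₀).app X ≫ (kappa0 ι ιN ℓ hℓ).app X
      = (reflectorAdjunction ι).unit.app X ≫ (BIso ι ιN i hi ℓ hℓ e₀).hom.app X := by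
  rw [lam_comp ιN i hi ℓ e₀ X ((kappa0 ι ιN ℓ hℓ).app X)]
  have hu : (ℓ.op.lanAdjunction Type).homEquiv ((NF ιN).obj X) ((reflector ι ⋙ ι).obj X)
      ((kappa0 ι ιN ℓ hℓ).app X)
    = (NF ιN).map ((reflectorAdjunction ι).unit.app X)
        ≫ (vD ι ιN ℓ hℓ).app ((reflector ι).obj X) := by
    rw [kappa0_app, Adjunction.homEquiv_naturality_left, Adjunction.homEquiv_unit]
    simp only [Functor.comp_obj]
    rw [(ℓ.op.lanAdjunction Type).right_triangle_components (ι.obj ((reflector ι).obj X)),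
      Category.comp_id]
  have h2 := (epsIso ιN i hi).inv.naturality ((reflectorAdjunction ι).unit.app X)
  have h2' : (epsIso ιN i hi).inv.app X
        ≫ (Wi i).map ((NF ιN).map ((reflectorAdjunction ι).unit.app X))
      = (reflectorAdjunction ι).unit.app X
        ≫ (epsIso ιN i hi).inv.app ((reflector ι ⋙ ι).obj X) := by
    simpa using h2.symm
  rw [hu, CategoryTheory.Functor.map_comp]
  simp only [← Category.assoc]
  rw [h2', BIso_hom_app ι ιN i hi ℓ hℓ e₀ X]
  simp only [Category.assoc]

include hℓ e₀ in
lemma lam_kappa :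
    lamQ ιN i hi ℓ e₀ ≫ (kappa0 ι ιN ℓ hℓ ≫ (BIso ι ιN i hi ℓ hℓ e₀).inv)
      = (reflectorAdjunction ι).unit := by
  apply NatTrans.ext
  funext X
  simp only [NatTrans.comp_app]
  rw [← Category.assoc, lam_kappa0, Category.assoc, Iso.hom_inv_id_app, Category.comp_id]

end NecklaceAux

open NecklaceAux

/-- In a necklace context (1-categorical, set-valued version) `(C, L, 𝒩)`, with
`i : C ⥤ 𝒩` the corestricted Yoneda embedding and `ℓ = L|𝒩 : 𝒩 ⥤ C`, the functor
`Q = ℓ_! ∘ i_* : Psh(C) ⥤ Psh(C)` admits a canonical natural transformation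
`λ : Id ⟶ Q` which is an `L`-local equivalence; the induced `L`-local transformation
`κ : Q ⟶ L` (factoring the unit `Id ⟶ L` through `λ`) has the property that for any
presheaf `X` the map `Q(X) ⟶ L(X)` is an equivalence iff `Q(X)` is `L`-local. -/
theorem stmt_4 {C : Type} [SmallCategory C] {D : Type 1} [Category.{0} D]
    (ι : D ⥤ (Cᵒᵖ ⥤ Type)) [Reflective ι]
    (hlocal : ∀ c : C, IsIso ((reflectorAdjunction ι).unit.app (yoneda.obj c)))
    {E : Type} [SmallCategory E] (ιN : E ⥤ (Cᵒᵖ ⥤ Type)) [ιN.Full] [ιN.Faithful]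
    (i : C ⥤ E) (hi : i ⋙ ιN ≅ yoneda)
    (ℓ : E ⥤ C) (hℓ : ιN ⋙ (reflector ι ⋙ ι) ≅ ℓ ⋙ yoneda)
    (e₀ : i ⋙ ℓ ≅ 𝟭 C) :
    ∃ (lam : 𝟭 (Cᵒᵖ ⥤ Type) ⟶ (i.op.ran ⋙ ℓ.op.lan))
      (κ : (i.op.ran ⋙ ℓ.op.lan) ⟶ reflector ι ⋙ ι),
      (∀ X : Cᵒᵖ ⥤ Type, IsIso ((reflector ι).map (lam.app X))) ∧
      lam ≫ κ = (reflectorAdjunction ι).unit ∧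
      (∀ X : Cᵒᵖ ⥤ Type, IsIso ((reflector ι).map (κ.app X))) ∧
      (∀ X : Cᵒᵖ ⥤ Type,
        (IsIso (κ.app X) ↔
          IsIso ((reflectorAdjunction ι).unit.app ((i.op.ran ⋙ ℓ.op.lan).obj X)))) := by
  have rIso : i.op.ran ≅ NF ιN :=
    (i.op.ranAdjunction Type).rightAdjointUniq (myAdj ιN i hi)
  let ρ : i.op.ran ⋙ ℓ.op.lan ≅ NF ιN ⋙ ℓ.op.lan := Functor.isoWhiskerRight rIso ℓ.op.lan
  set lam : 𝟭 (Cᵒᵖ ⥤ Type) ⟶ (i.op.ran ⋙ ℓ.op.lan) :=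
    lamQ ιN i hi ℓ e₀ ≫ ρ.inv with hlam
  set κ : (i.op.ran ⋙ ℓ.op.lan) ⟶ reflector ι ⋙ ι :=
    ρ.hom ≫ (kappa0 ι ιN ℓ hℓ ≫ (BIso ι ιN i hi ℓ hℓ e₀).inv) with hκ
  have p1 : ∀ X : Cᵒᵖ ⥤ Type, IsIso ((reflector ι).map (lam.app X)) := by
    intro X
    rw [hlam, NatTrans.comp_app, Functor.map_comp]
    haveI h1 := isIso_L_map_lamQ ι ιN i hi ℓ hℓ e₀ X
    haveI h2 : IsIso (ρ.inv.app X) := by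
      rw [← Iso.app_inv]
      infer_instance
    infer_instance
  have p2 : lam ≫ κ = (reflectorAdjunction ι).unit := by
    rw [hlam, hκ, Category.assoc, Iso.inv_hom_id_assoc]
    exact lam_kappa ι ιN i hi ℓ hℓ e₀
  have p3 : ∀ X : Cᵒᵖ ⥤ Type, IsIso ((reflector ι).map (κ.app X)) := by
    intro X
    have hc : (reflector ι).map (lam.app X) ≫ (reflector ι).map (κ.app X)
        = (reflector ι).map ((reflectorAdjunction ι).unit.app X) := by
      rw [← Functor.map_comp, ← NatTrans.comp_app, p2]
    haveI h1 := p1 X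
    haveI h2 : IsIso ((reflector ι).map ((reflectorAdjunction ι).unit.app X)) := by
      have ht := (reflectorAdjunction ι).left_triangle_components X
      haveI : IsIso (𝟙 ((reflector ι).obj X)) := IsIso.id _
      exact IsIso.of_isIso_fac_right ht
    exact IsIso.of_isIso_fac_left hc
  have hunitι : ∀ d : D, IsIso ((reflectorAdjunction ι).unit.app (ι.obj d)) := by
    intro d
    have ht := (reflectorAdjunction ι).right_triangle_components d
    haveI : IsIso (𝟙 (ι.obj d)) := IsIso.id _
    exact IsIso.of_isIso_fac_right ht
  have p4 : ∀ X : Cᵒᵖ ⥤ Type,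
      IsIso (κ.app X) ↔
        IsIso ((reflectorAdjunction ι).unit.app ((i.op.ran ⋙ ℓ.op.lan).obj X)) := by
    intro X
    have hnat : κ.app X ≫ (reflectorAdjunction ι).unit.app ((reflector ι ⋙ ι).obj X)
        = (reflectorAdjunction ι).unit.app ((i.op.ran ⋙ ℓ.op.lan).obj X)
          ≫ (reflector ι ⋙ ι).map (κ.app X) := by
      simpa using (reflectorAdjunction ι).unit.naturality (κ.app X)
    haveI hκiso : IsIso ((reflector ι ⋙ ι).map (κ.app X)) := by
      have : (reflector ι ⋙ ι).map (κ.app X) = ι.map ((reflector ι).map (κ.app X)) := rfl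
      rw [this]
      haveI := p3 X
      infer_instance
    haveI hui : IsIso ((reflectorAdjunction ι).unit.app ((reflector ι ⋙ ι).obj X)) :=
      hunitι ((reflector ι).obj X)
    constructor
    · intro h
      have heq : (reflectorAdjunction ι).unit.app ((i.op.ran ⋙ ℓ.op.lan).obj X)
          = (κ.app X ≫ (reflectorAdjunction ι).unit.app ((reflector ι ⋙ ι).obj X))
            ≫ inv ((reflector ι ⋙ ι).map (κ.app X)) := by
        rw [IsIso.eq_comp_inv]
        exact hnat.symm
      rw [heq]
      infer_instance
    · intro h
      have heq : κ.app X
          = ((reflectorAdjunction ι).unit.app ((i.op.ran ⋙ ℓ.op.lan).obj X)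
              ≫ (reflector ι ⋙ ι).map (κ.app X))
            ≫ inv ((reflectorAdjunction ι).unit.app ((reflector ι ⋙ ι).obj X)) := by
        rw [IsIso.eq_comp_inv]
        exact hnat
      rw [heq]
      infer_instance
  exact ⟨lam, κ, p1, p2, p3, p4⟩


end
end

section
/- The full inclusion Nec_thin^op ↪ Nec^op of opposite of thin necklaces into the opposite of all necklaces is 1-final: for every necklace N, the slice category Nec_{thin/N} is connected. Consequently, for any functor F : Nec^op → C into a 1-category C, the colimit of F equals the colimit of its restriction to Nec_thin^op. -/
open CategoryTheory CategoryTheory.Limits Simplicial SSet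
open Opposite

noncomputable section

/-- The two-point simplicial set `Δ⁰ ⨿ Δ⁰`. -/
abbrev PtPt : SSet.{0} := Δ[0] ⨿ Δ[0]

/-- The category of bi-pointed simplicial sets, i.e. simplicial sets equipped with
two chosen vertices, with maps preserving both base points. -/
abbrev BiSSet := Under PtPt

/-- The concatenation `A ∨ B` of two bi-pointed simplicial sets: the pushout of
`A ← Δ⁰ → B` along `a_max` and `b_min`, bi-pointed by `(a_min, b_max)`. -/
def wedge (A B : BiSSet) : BiSSet :=
  Under.mk (coprod.desc
    (coprod.inl ≫ A.hom ≫ pushout.inl (coprod.inr ≫ A.hom) (coprod.inl ≫ B.hom))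
    (coprod.inr ≫ B.hom ≫ pushout.inr (coprod.inr ≫ A.hom) (coprod.inl ≫ B.hom)))

/-- `Δ⁰`, bi-pointed by its unique vertex twice. -/
def unitBi : BiSSet := Under.mk (coprod.desc (𝟙 Δ[0]) (𝟙 Δ[0]))

/-- The standard simplex `Δⁿ` bi-pointed by its initial and terminal vertices. -/
def bead (n : ℕ) : BiSSet :=
  Under.mk (coprod.desc
    (SSet.stdSimplex.map (SimplexCategory.const (SimplexCategory.mk 0) (SimplexCategory.mk n) 0))
    (SSet.stdSimplex.map (SimplexCategory.const (SimplexCategory.mk 0) (SimplexCategory.mk n)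
      (Fin.last n))))

/-- The necklace `Δ^{n₁} ∨ ⋯ ∨ Δ^{n_k}` associated to a list of natural numbers. -/
def neckOf : List ℕ → BiSSet := fun l => match l with
  | [] => unitBi
  | n :: l => wedge (bead n) (neckOf l)

/-- A bi-pointed simplicial set is a necklace if it is isomorphic to a concatenation
of standard simplices (bi-pointed by their extreme vertices). -/
def IsNecklace (A : BiSSet) : Prop := ∃ l : List ℕ, Nonempty (A ≅ neckOf l)

/-- The category of necklaces. -/
abbrev Nec := ObjectProperty.FullSubcategory IsNecklace

/-- A necklace is thin if it is a concatenation of `1`-simplices and at most one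
`2`-simplex, i.e. of the form `Δ^{n₁} ∨ ⋯ ∨ Δ^{n_r}` with all `nᵢ ≥ 1` and
`Σᵢ nᵢ ≤ r + 1`. -/
def IsThin (N : Nec) : Prop :=
  ∃ l : List ℕ, (∀ a ∈ l, 1 ≤ a) ∧ l.sum ≤ l.length + 1 ∧ Nonempty (N.obj ≅ neckOf l)

/-- The full subcategory of thin necklaces. -/
abbrev NecThin := ObjectProperty.FullSubcategory IsThin

/-- The inclusion of thin necklaces into necklaces. -/
abbrev thinInclusion : NecThin ⥤ Nec := ObjectProperty.ι IsThin

namespace NkAux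

/-- `Cov l c x y` : the interval `[x,y]` is contained in one of the blocks of the
necklace pattern `l`, placed starting at `c`. -/
def Cov (l : List ℕ) (c x y : ℕ) : Prop := match l with
  | [] => c ≤ x ∧ y ≤ c
  | n :: l => (c ≤ x ∧ y ≤ c + n) ∨ Cov l (c + n) x y

lemma Cov.lower : ∀ {l c x y}, Cov l c x y → c ≤ x := by
  intro l
  induction l with
  | nil => intro c x y h; exact h.1
  | cons n l ih =>
    intro c x y h
    rcases h with h | h
    · exact h.1
    · exact le_trans (Nat.le_add_right c n) (ih h)

lemma Cov.upper : ∀ {l c x y}, Cov l c x y → y ≤ c + l.sum := by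
  intro l
  induction l with
  | nil => intro c x y h; simpa using h.2
  | cons n l ih =>
    intro c x y h
    rcases h with h | h
    · simp only [List.sum_cons]
      omega
    · have := ih h
      simp only [List.sum_cons]
      omega

lemma Cov.mono : ∀ {l c x y x' y'}, Cov l c x y → x ≤ x' → y' ≤ y → Cov l c x' y' := by
  intro l
  induction l with
  | nil => intro c x y x' y' h hx hy; exact ⟨le_trans h.1 hx, le_trans hy h.2⟩
  | cons n l ih =>
    intro c x y x' y' h hx hy
    rcases h with h | h
    · exact Or.inl ⟨le_trans h.1 hx, le_trans hy h.2⟩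
    · exact Or.inr (ih h hx hy)

/-- every sub-interval of length ≤ 1 of the pattern is inside a block. -/
lemma Cov.of_unit : ∀ (l : List ℕ) (c x y : ℕ), c ≤ x → x ≤ y → y ≤ x + 1 →
    y ≤ c + l.sum → Cov l c x y := by
  intro l
  induction l with
  | nil => intro c x y h1 h2 h3 h4; simp only [List.sum_nil, Nat.add_zero] at h4
           exact ⟨h1, h4⟩
  | cons n l ih =>
    intro c x y h1 h2 h3 h4
    by_cases h : y ≤ c + n
    · exact Or.inl ⟨h1, h⟩
    · refine Or.inr (ih (c+n) x y ?_ h2 h3 ?_)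
      · omega
      · simp only [List.sum_cons] at h4; omega

lemma Cov.shift_iff : ∀ (l : List ℕ) (c d x y : ℕ),
    Cov l (d + c) (d + x) (d + y) ↔ Cov l c x y := by
  intro l
  induction l with
  | nil => intro c d x y; simp only [Cov]; omega
  | cons n l ih =>
    intro c d x y
    constructor
    · rintro (h | h)
      · exact Or.inl (by omega)
      · refine Or.inr ((ih (c+n) d x y).1 ?_)
        rwa [Nat.add_assoc] at h
    · rintro (h | h)
      · exact Or.inl (by omega)
      · exact Or.inr (by rw [Nat.add_assoc]; exact (ih (c+n) d x y).2 h)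

lemma Cov.repl_le : ∀ (m : ℕ) (c x y : ℕ), Cov (List.replicate m 1) c x y → y ≤ x + 1 := by
  intro m
  induction m with
  | zero => intro c x y h; rcases h with ⟨h1, h2⟩; omega
  | succ k ih =>
    intro c x y h
    rcases h with h | h
    · omega
    · exact ih (c+1) x y h

lemma sum_replicate_one (m : ℕ) : (List.replicate m 1).sum = m := by
  simp

lemma Cov.of_ge {l c x y} (h1 : c ≤ x) (h2 : y ≤ c) : Cov l c x y := by
  cases l with
  | nil => exact ⟨h1, h2⟩
  | cons n l => exact Or.inl ⟨h1, le_trans h2 (Nat.le_add_right c n)⟩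

lemma Cov.append_iff : ∀ (l₁ l₂ : List ℕ) (c x y : ℕ),
    Cov (l₁ ++ l₂) c x y ↔ (Cov l₁ c x y ∨ Cov l₂ (c + l₁.sum) x y) := by
  intro l₁
  induction l₁ with
  | nil =>
    intro l₂ c x y
    simp only [List.nil_append, List.sum_nil, Nat.add_zero]
    constructor
    · exact Or.inr
    · rintro (⟨h1, h2⟩ | h)
      · exact Cov.of_ge h1 h2
      · exact h
  | cons n l ih =>
    intro l₂ c x y
    constructor
    · rintro (h | h)
      · exact Or.inl (Or.inl h)
      · rcases (ih l₂ (c+n) x y).1 h with h | h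
        · exact Or.inl (Or.inr h)
        · refine Or.inr ?_
          simp only [List.sum_cons]
          rwa [← Nat.add_assoc]
    · rintro ((h | h) | h)
      · exact Or.inl h
      · exact Or.inr ((ih l₂ (c+n) x y).2 (Or.inl h))
      · refine Or.inr ((ih l₂ (c+n) x y).2 (Or.inr ?_))
        simp only [List.sum_cons] at h
        rwa [Nat.add_assoc]

/-- The concrete model of the necklace with pattern `l`, as a simplicial set:
an `k`-simplex is a monotone map `Fin (k+1) → ℕ` whose range is contained in a block. -/
def NModel (l : List ℕ) : SSet.{0} where
  obj k := {f : Fin (k.unop.len + 1) →o ℕ // Cov l 0 (f 0) (f (Fin.last _))}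
  map {k k'} α := TypeCat.ofHom fun f => ⟨f.1.comp α.unop.toOrderHom,
    Cov.mono f.2 (f.1.monotone (Fin.zero_le _)) (f.1.monotone (Fin.le_last _))⟩
  map_id k := by
    apply ConcreteCategory.hom_ext; intro f
    apply Subtype.ext
    rfl
  map_comp {k k' k''} α β := by
    apply ConcreteCategory.hom_ext; intro f
    apply Subtype.ext
    rfl

/-- vertices of the model -/
def vertN (l : List ℕ) (x : ℕ) (h1 : Cov l 0 x x) : Δ[0] ⟶ NModel l where
  app k := TypeCat.ofHom fun _ => ⟨OrderHom.const _ x, h1⟩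
  naturality k k' α := by
    apply ConcreteCategory.hom_ext; intro σ
    apply Subtype.ext
    rfl

lemma Cov.self {l : List ℕ} {x : ℕ} (h : x ≤ l.sum) : Cov l 0 x x :=
  Cov.of_unit l 0 x x (Nat.zero_le x) le_rfl (Nat.le_succ x) (by omega)

/-- The bi-pointed model necklace. -/
def NB (l : List ℕ) : BiSSet := Under.mk
  (coprod.desc (vertN l 0 (Cov.self (Nat.zero_le _))) (vertN l l.sum (Cov.self le_rfl)))

/-- admissible vertex maps between necklace patterns -/
structure Adm (l L : List ℕ) (v : ℕ →o ℕ) : Prop where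
  cov : ∀ x y, x ≤ y → Cov l 0 x y → Cov L 0 (v x) (v y)
  zero : v 0 = 0
  top : v l.sum = L.sum

/-- the map of models induced by an admissible vertex map -/
def indN {l L : List ℕ} (v : ℕ →o ℕ)
    (h : ∀ x y, x ≤ y → Cov l 0 x y → Cov L 0 (v x) (v y)) : NModel l ⟶ NModel L where
  app k := TypeCat.ofHom fun f => ⟨v.comp f.1, h _ _ (f.1.monotone (Fin.zero_le _)) f.2⟩
  naturality k k' α := by
    apply ConcreteCategory.hom_ext; intro f
    apply Subtype.ext
    rfl

@[simp] lemma indN_app_coe {l L : List ℕ} (v : ℕ →o ℕ)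
    (h : ∀ x y, x ≤ y → Cov l 0 x y → Cov L 0 (v x) (v y)) (k) (f : (NModel l).obj k)
    (i : Fin (k.unop.len + 1)) : ((indN v h).app k f).1 i = v (f.1 i) := rfl

lemma indN_comp {l L M : List ℕ} (v w : ℕ →o ℕ) (hv) (hw) :
    indN (l := l) (L := L) v hv ≫ indN (l := L) (L := M) w hw
      = indN (w.comp v) (fun x y hxy hc => hw _ _ (v.monotone hxy) (hv _ _ hxy hc)) := by
  apply NatTrans.ext
  funext k; apply ConcreteCategory.hom_ext; intro f
  apply Subtype.ext
  rfl

lemma indN_congr {l L : List ℕ} (v w : ℕ →o ℕ)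
    (hv : ∀ x y, x ≤ y → Cov l 0 x y → Cov L 0 (v x) (v y))
    (hw : ∀ x y, x ≤ y → Cov l 0 x y → Cov L 0 (w x) (w y))
    (h : ∀ x, x ≤ l.sum → v x = w x) :
    indN (l := l) (L := L) v hv = indN (l := l) (L := L) w hw := by
  apply NatTrans.ext
  funext k; apply ConcreteCategory.hom_ext; intro f
  apply Subtype.ext
  apply OrderHom.ext
  funext i
  exact h _ (le_trans (f.1.monotone (Fin.le_last i)) (by simpa using f.2.upper))

/-- the induced map on bi-pointed models -/
def indB {l L : List ℕ} (v : ℕ →o ℕ) (h : Adm l L v) : NB l ⟶ NB L :=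
  Under.homMk (indN v h.cov) (by
    apply Limits.coprod.hom_ext
    · show coprod.inl ≫ (Under.mk _).hom ≫ _ = coprod.inl ≫ (Under.mk _).hom
      simp only [Under.mk_hom]
      erw [coprod.inl_desc_assoc, coprod.inl_desc]
      apply NatTrans.ext
      funext k; apply ConcreteCategory.hom_ext; intro f
      apply Subtype.ext
      apply OrderHom.ext
      funext i
      exact h.zero
    · show coprod.inr ≫ (Under.mk _).hom ≫ _ = coprod.inr ≫ (Under.mk _).hom
      simp only [Under.mk_hom]
      erw [coprod.inr_desc_assoc, coprod.inr_desc]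
      apply NatTrans.ext
      funext k; apply ConcreteCategory.hom_ext; intro f
      apply Subtype.ext
      apply OrderHom.ext
      funext i
      exact h.top)

@[simp] lemma indB_right {l L : List ℕ} (v : ℕ →o ℕ) (h : Adm l L v) :
    (indB v h).right = indN v h.cov := rfl

lemma indB_comp {l L M : List ℕ} (v w : ℕ →o ℕ) (hv : Adm l L v) (hw : Adm L M w) :
    indB v hv ≫ indB w hw = indB (w.comp v)
      ⟨fun x y hxy hc => hw.cov _ _ (v.monotone hxy) (hv.cov _ _ hxy hc),
       by simp [hv.zero, hw.zero], by simp [hv.top, hw.top]⟩ := by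
  ext1
  rw [Under.comp_right]
  simp only [indB_right]
  exact indN_comp _ _ _ _

lemma indB_congr {l L : List ℕ} (v w : ℕ →o ℕ) (hv : Adm l L v) (hw : Adm l L w)
    (h : ∀ x, x ≤ l.sum → v x = w x) : indB v hv = indB w hw := by
  ext1
  simp only [indB_right]
  exact indN_congr v w _ _ h

section Fullness
variable {l L : List ℕ}

/-- the interval `d`-simplex starting at `x` -/
def iSimp (l : List ℕ) (x d : ℕ) (h : Cov l 0 x (x + d)) :
    (NModel l).obj (op (SimplexCategory.mk d)) :=
  ⟨⟨fun i => x + i.1, fun i j hij => by simp only; omega⟩, h⟩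

/-- the value of a simplicial map on vertices -/
def vval (g : NModel l ⟶ NModel L) (x : ℕ) (h : x ≤ l.sum) : ℕ :=
  (g.app (op (SimplexCategory.mk 0)) ⟨OrderHom.const _ x, Cov.self h⟩).1 0

lemma fullness_aux (g : NModel l ⟶ NModel L) (k : SimplexCategoryᵒᵖ)
    (f : (NModel l).obj k) (i : Fin (k.unop.len + 1)) :
    (g.app k f).1 i = vval g (f.1 i)
      (le_trans (f.1.monotone (Fin.le_last i)) (by simpa using f.2.upper)) := by
  have hb : (f.1 i) ≤ l.sum :=
    le_trans (f.1.monotone (Fin.le_last i)) (by simpa using f.2.upper)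
  have h := ConcreteCategory.congr_hom (g.naturality (SimplexCategory.const (SimplexCategory.mk 0) k.unop i).op) f
  have h' : (g.app (op (SimplexCategory.mk 0))
        ((NModel l).map (SimplexCategory.const (SimplexCategory.mk 0) k.unop i).op f))
      = ((NModel L).map (SimplexCategory.const (SimplexCategory.mk 0) k.unop i).op
          (g.app k f)) := h
  have h2 : ((NModel l).map (SimplexCategory.const (SimplexCategory.mk 0) k.unop i).op f)
      = ⟨OrderHom.const _ (f.1 i), Cov.self hb⟩ := Subtype.ext rfl
  calc (g.app k f).1 i
      = ((NModel L).map (SimplexCategory.const (SimplexCategory.mk 0) k.unop i).op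
          (g.app k f)).1 0 := rfl
    _ = (g.app (op (SimplexCategory.mk 0))
        ((NModel l).map (SimplexCategory.const (SimplexCategory.mk 0) k.unop i).op f)).1 0 := by
        rw [h']
    _ = vval g (f.1 i) hb := by rw [h2]; rfl

lemma vval_mono (g : NModel l ⟶ NModel L) (x : ℕ) (hx : x + 1 ≤ l.sum)
    (hc : Cov l 0 x (x + 1)) :
    vval g x (by omega) ≤ vval g (x+1) hx := by
  have hσ := (g.app (op (SimplexCategory.mk 1)) (iSimp l x 1 hc))
  have h0 := fullness_aux g (op (SimplexCategory.mk 1)) (iSimp l x 1 hc) 0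
  have h1 := fullness_aux g (op (SimplexCategory.mk 1)) (iSimp l x 1 hc) 1
  have hm := (g.app (op (SimplexCategory.mk 1)) (iSimp l x 1 hc)).1.monotone
      (show (0 : Fin 2) ≤ 1 by decide)
  rw [h0, h1] at hm
  exact hm

lemma vval_cov (g : NModel l ⟶ NModel L) (x y : ℕ) (hxy : x ≤ y) (hc : Cov l 0 x y) :
    Cov L 0 (vval g x (le_trans hxy (by simpa using hc.upper)))
      (vval g y (by simpa using hc.upper)) := by
  have hy : y = x + (y - x) := by omega
  have hc' : Cov l 0 x (x + (y - x)) := by rw [← hy]; exact hc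
  have h2 := (g.app (op (SimplexCategory.mk (y - x))) (iSimp l x (y-x) hc')).2
  have h0 := fullness_aux g (op (SimplexCategory.mk (y - x))) (iSimp l x (y-x) hc') 0
  have hl := fullness_aux g (op (SimplexCategory.mk (y - x))) (iSimp l x (y-x) hc')
      (Fin.last _)
  rw [h0, hl] at h2
  have e0 : (iSimp l x (y-x) hc').1 0 = x := rfl
  have el : (iSimp l x (y-x) hc').1 (Fin.last _) = y := by
    show x + (Fin.last (y-x)).1 = y
    simp [Fin.last]; omega
  simp only [e0, el] at h2
  exact h2


/-- the vertex function of a simplicial map, extended affinely beyond `l.sum` -/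
def vfun (g : NModel l ⟶ NModel L) : ℕ →o ℕ := by
  refine ⟨fun x => vval g (min x l.sum) (min_le_right _ _) + (x - l.sum), ?_⟩
  apply monotone_nat_of_le_succ
  intro x
  by_cases hx : x + 1 ≤ l.sum
  · have h1 : min x l.sum = x := by omega
    have h2 : min (x+1) l.sum = x + 1 := by omega
    have hc : Cov l 0 x (x+1) := Cov.of_unit l 0 x (x+1) (Nat.zero_le _) (by omega) le_rfl
      (by omega)
    have := vval_mono g x hx hc
    simp only [h1, h2]
    have hxs : x - l.sum = 0 := by omega
    have hxs' : x + 1 - l.sum = 0 := by omega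
    rw [hxs, hxs']
    simpa using this
  · have h1 : min x l.sum = l.sum := by omega
    have h2 : min (x+1) l.sum = l.sum := by omega
    simp only [h1, h2]
    omega

lemma vfun_eq (g : NModel l ⟶ NModel L) (x : ℕ) (h : x ≤ l.sum) :
    vfun g x = vval g x h := by
  have h1 : min x l.sum = x := by omega
  have h2 : x - l.sum = 0 := by omega
  simp only [vfun, OrderHom.coe_mk, h1, h2, Nat.add_zero]

lemma vfun_cov (g : NModel l ⟶ NModel L) :
    ∀ x y, x ≤ y → Cov l 0 x y → Cov L 0 (vfun g x) (vfun g y) := by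
  intro x y hxy hc
  have hy : y ≤ l.sum := by simpa using hc.upper
  rw [vfun_eq g x (le_trans hxy hy), vfun_eq g y hy]
  exact vval_cov g x y hxy hc

lemma exists_adm (G : NB l ⟶ NB L) : ∃ (v : ℕ →o ℕ) (h : Adm l L v), G = indB v h := by
  set g := G.right with hg
  have e1 : coprod.inl ≫ (NB l).hom = vertN l 0 (Cov.self (Nat.zero_le _)) :=
    coprod.inl_desc _ _
  have e2 : coprod.inr ≫ (NB l).hom = vertN l l.sum (Cov.self le_rfl) :=
    coprod.inr_desc _ _
  have e1' : coprod.inl ≫ (NB L).hom = vertN L 0 (Cov.self (Nat.zero_le _)) :=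
    coprod.inl_desc _ _
  have e2' : coprod.inr ≫ (NB L).hom = vertN L L.sum (Cov.self le_rfl) :=
    coprod.inr_desc _ _
  have hw : (NB l).hom ≫ g = (NB L).hom := Under.w G
  have h1 : vertN l 0 (Cov.self (Nat.zero_le _)) ≫ g = vertN L 0 (Cov.self (Nat.zero_le _)) := by
    rw [← e1, ← e1', ← hw]; exact Category.assoc _ _ _
  have h2 : vertN l l.sum (Cov.self le_rfl) ≫ g = vertN L L.sum (Cov.self le_rfl) := by
    rw [← e2, ← e2', ← hw]; exact Category.assoc _ _ _
  have pt : (Δ[0] : SSet.{0}).obj (op (SimplexCategory.mk 0)) :=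
    stdSimplex.const 0 0 _
  have hz : vval g 0 (Nat.zero_le _) = 0 := by
    have := ConcreteCategory.congr_hom (NatTrans.congr_app h1 (op (SimplexCategory.mk 0))) pt
    exact congr_fun (congrArg (fun z => (Subtype.val z : _ →o ℕ).toFun) this) 0
  have ht : vval g l.sum le_rfl = L.sum := by
    have := ConcreteCategory.congr_hom (NatTrans.congr_app h2 (op (SimplexCategory.mk 0))) pt
    exact congr_fun (congrArg (fun z => (Subtype.val z : _ →o ℕ).toFun) this) 0
  have hadm : Adm l L (vfun g) := by
    refine ⟨vfun_cov g, ?_, ?_⟩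
    · rw [vfun_eq g 0 (Nat.zero_le _)]; exact hz
    · rw [vfun_eq g l.sum le_rfl]; exact ht
  refine ⟨vfun g, hadm, ?_⟩
  apply Under.UnderMorphism.ext
  rw [indB_right]
  apply NatTrans.ext
  funext k; apply ConcreteCategory.hom_ext; intro f
  apply Subtype.ext
  apply OrderHom.ext
  funext i
  have := fullness_aux g k f i
  exact this.trans (vfun_eq g _ _).symm

end Fullness


-- ### shift/unshift lemmas and inclusions
lemma Cov.shift {n : ℕ} {l : List ℕ} {x y : ℕ} (h : Cov l 0 x y) :
    Cov (n :: l) 0 (n + x) (n + y) := by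
  refine Or.inr ?_
  have := (Cov.shift_iff l 0 n x y).2 h
  simpa using this

lemma Cov.unshift {n : ℕ} {l : List ℕ} {a b : ℕ} (h : Cov (n :: l) 0 a b)
    (hb : ¬ b ≤ n) : n ≤ a ∧ Cov l 0 (a - n) (b - n) := by
  rcases h with h | h
  · exfalso; omega
  · rw [Nat.zero_add] at h
    have ha : n ≤ a := h.lower
    have hb' : n ≤ b := by omega
    refine ⟨ha, ?_⟩
    have himp := (Cov.shift_iff l 0 n (a - n) (b - n))
    rw [Nat.add_zero] at himp
    rw [← himp]
    have e1 : n + (a - n) = a := by omega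
    have e2 : n + (b - n) = b := by omega
    rw [e1, e2]
    exact h

def beadIncl (n : ℕ) (l : List ℕ) : (Δ[n] : SSet.{0}) ⟶ NModel (n :: l) where
  app k := TypeCat.ofHom fun σ => ⟨⟨fun i => ((stdSimplex.objEquiv σ).toOrderHom i : ℕ),
      fun i j hij => by
        simpa using ((stdSimplex.objEquiv σ).toOrderHom.monotone hij)⟩,
    Or.inl ⟨Nat.zero_le _, by
      have := Fin.is_le ((stdSimplex.objEquiv σ).toOrderHom (Fin.last _))
      simp only [OrderHom.coe_mk, SimplexCategory.len_mk] at this ⊢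
      exact le_trans this (by omega)⟩⟩
  naturality k k' α := by apply ConcreteCategory.hom_ext; intro σ; apply Subtype.ext; rfl

def shiftIncl (n : ℕ) (l : List ℕ) : NModel l ⟶ NModel (n :: l) where
  app k := TypeCat.ofHom fun f => ⟨⟨fun i => n + f.1 i, fun i j hij => by
      simp only; exact Nat.add_le_add_left (f.1.monotone hij) n⟩, Cov.shift f.2⟩
  naturality k k' α := by apply ConcreteCategory.hom_ext; intro f; apply Subtype.ext; rfl

-- ### The comparison isomorphism `neckOf l ≅ NB l`

/-- equality test for simplices of the standard simplex -/
lemma stdEq {n : ℕ} {k : SimplexCategoryᵒᵖ} {a b : (Δ[n] : SSet.{0}).obj k}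
    (h : ∀ i, (stdSimplex.objEquiv a).toOrderHom i
      = (stdSimplex.objEquiv b).toOrderHom i) : a = b := by
  apply (stdSimplex.objEquiv).injective
  apply SimplexCategory.Hom.ext
  apply OrderHom.ext
  funext i
  exact h i

lemma elemEq {X Y : SSet.{0}} {f g : X ⟶ Y} (h : f = g) (k : SimplexCategoryᵒᵖ)
    (x : X.obj k) : f.app k x = g.app k x := by rw [h]

lemma fin_one_eq {m : ℕ} (h : m = 0) (a b : Fin (m + 1)) : a = b := by
  subst h; apply Fin.ext; omega

section Step
variable (n : ℕ) (l : List ℕ) (e : neckOf l ≅ NB l)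

/-- the max vertex of the bead, as the left leg of the wedge span -/
def maxB : (Δ[0] : SSet.{0}) ⟶ (bead n).right := coprod.inr ≫ (bead n).hom

/-- the min vertex of the abstract necklace, the right leg of the wedge span -/
def minA : (Δ[0] : SSet.{0}) ⟶ (neckOf l).right := coprod.inl ≫ (neckOf l).hom

lemma maxB_eq : maxB n = SSet.stdSimplex.map (SimplexCategory.const (SimplexCategory.mk 0)
    (SimplexCategory.mk n) (Fin.last n)) := coprod.inr_desc _ _

lemma minA_g : minA l ≫ e.hom.right = vertN l 0 (Cov.self (Nat.zero_le _)) := by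
  have hw : (neckOf l).hom ≫ e.hom.right = (NB l).hom := Under.w e.hom
  show coprod.inl ≫ (neckOf l).hom ≫ e.hom.right = _
  rw [hw]
  exact coprod.inl_desc _ _

lemma minA_g' : vertN l 0 (Cov.self (Nat.zero_le _)) ≫ e.inv.right = minA l := by
  have hw : (NB l).hom ≫ e.inv.right = (neckOf l).hom := Under.w e.inv
  show _ = coprod.inl ≫ (neckOf l).hom
  rw [← hw]
  show _ = (coprod.inl ≫ (NB l).hom) ≫ e.inv.right
  rw [show coprod.inl ≫ (NB l).hom = vertN l 0 (Cov.self (Nat.zero_le _)) from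
    coprod.inl_desc _ _]
  rfl

lemma comm_step : maxB n ≫ beadIncl n l
    = minA l ≫ (e.hom.right ≫ shiftIncl n l) := by
  rw [maxB_eq, show minA l ≫ (e.hom.right ≫ shiftIncl n l) = (minA l ≫ e.hom.right) ≫ shiftIncl n l from (Category.assoc _ _ _).symm, minA_g]
  apply NatTrans.ext
  funext k; apply ConcreteCategory.hom_ext; intro σ
  apply Subtype.ext
  apply OrderHom.ext
  funext i
  rfl

/-- the forward comparison map -/
def stepHom : (pushout (maxB n) (minA l) : SSet.{0}) ⟶ NModel (n :: l) :=
  pushout.desc (beadIncl n l) (e.hom.right ≫ shiftIncl n l) (comm_step n l e)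

/-- a simplex of `NModel (n::l)` contained in the first bead, as a simplex of `Δ[n]` -/
def toBead {k : SimplexCategoryᵒᵖ} (f : (NModel (n :: l)).obj k)
    (h : f.1 (Fin.last _) ≤ n) : (Δ[n] : SSet.{0}).obj k :=
  stdSimplex.objMk ⟨fun i => ⟨f.1 i, by
      simp only [SimplexCategory.len_mk]
      have := f.1.monotone (Fin.le_last i); omega⟩,
    fun i j hij => by simp only [Fin.mk_le_mk]; exact f.1.monotone hij⟩

/-- a simplex of `NModel (n::l)` not contained in the first bead, shifted down to `NModel l` -/
def unshiftS {k : SimplexCategoryᵒᵖ} (f : (NModel (n :: l)).obj k)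
    (h : ¬ f.1 (Fin.last _) ≤ n) : (NModel l).obj k := by
  have h2 := (Cov.unshift f.2 h).2
  have h1 : n ≤ f.1 0 := (Cov.unshift f.2 h).1
  exact ⟨⟨fun i => f.1 i - n, fun i j hij => by
      have := f.1.monotone hij; simp only; omega⟩, h2⟩

/-- the backward comparison map -/
def stepInv : NModel (n :: l) ⟶ (pushout (maxB n) (minA l) : SSet.{0}) where
  app k := TypeCat.ofHom fun f =>
    if h : f.1 (Fin.last _) ≤ n then
      (pushout.inl (maxB n) (minA l)).app k (toBead n l f h)
    else
      (pushout.inr (maxB n) (minA l)).app k (e.inv.right.app k (unshiftS n l f h))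
  naturality k k' α := by
    apply ConcreteCategory.hom_ext; intro f
    have hnat := fun (z : (Δ[n] : SSet.{0}).obj k) =>
      NatTrans.naturality_apply (pushout.inl (maxB n) (minA l)) α z
    have hnat' := fun (z : (neckOf l).right.obj k) =>
      NatTrans.naturality_apply (pushout.inr (maxB n) (minA l)) α z
    have hnat'' : ∀ (z : (NModel l).obj k), e.inv.right.app k' ((NModel l).map α z)
        = (neckOf l).right.map α (e.inv.right.app k z) := fun z =>
      NatTrans.naturality_apply e.inv.right α z
    set fα := (NModel (n :: l)).map α f with hfα
    by_cases h : f.1 (Fin.last _) ≤ n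
    · have hα : fα.1 (Fin.last _) ≤ n :=
        le_trans (f.1.monotone (Fin.le_last _)) h
      show (if hh : fα.1 (Fin.last _) ≤ n then _ else _) = _
      rw [dif_pos hα]
      show _ = ((pushout (maxB n) (minA l)).map α)
        (if hh : f.1 (Fin.last _) ≤ n then _ else _)
      rw [dif_pos h]
      have : toBead n l fα hα = (Δ[n] : SSet.{0}).map α (toBead n l f h) := by
        apply stdEq; intro i; rfl
      erw [this]
      exact hnat (toBead n l f h)
    · have h1 : n ≤ f.1 0 := (Cov.unshift f.2 h).1
      by_cases hα : fα.1 (Fin.last _) ≤ n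
      · -- mixed case: the simplex degenerates to the joint
        show (if hh : fα.1 (Fin.last _) ≤ n then _ else _) = _
        rw [dif_pos hα]
        show _ = ((pushout (maxB n) (minA l)).map α)
          (if hh : f.1 (Fin.last _) ≤ n then _ else _)
        rw [dif_neg h]
        -- all values of fα equal n
        have hconst : ∀ i, fα.1 i = n := by
          intro i
          have hle := fα.1.monotone (Fin.le_last i)
          have hge := fα.1.monotone (Fin.zero_le i)
          have : n ≤ fα.1 0 := h1.trans (f.1.monotone (Fin.zero_le _))
          omega
        -- the unique simplex of Δ[0]
        set pt : (Δ[0] : SSet.{0}).obj k' := stdSimplex.const 0 0 k' with hpt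
        have e1 : toBead n l fα hα = (maxB n).app k' pt := by
          rw [maxB_eq]
          apply stdEq
          intro i
          apply Fin.ext
          show fα.1 i = ((Fin.last n) : Fin (n+1)).1
          simpa using hconst i
        have e2 : (NModel l).map α (unshiftS n l f h)
            = (vertN l 0 (Cov.self (Nat.zero_le _))).app k' pt := by
          apply Subtype.ext
          apply OrderHom.ext
          funext i
          show f.1 (α.unop.toOrderHom i) - n = 0
          have h5 : f.1 (α.unop.toOrderHom i) = n := hconst i
          omega
        have e3 : e.inv.right.app k' ((vertN l 0 (Cov.self (Nat.zero_le _))).app k' pt)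
            = (minA l).app k' pt := by
          exact ConcreteCategory.congr_hom (NatTrans.congr_app (minA_g' l e) k') pt
        have cond := ConcreteCategory.congr_hom (NatTrans.congr_app
          (pushout.condition (f := maxB n) (g := minA l)) k') pt
        erw [e1]
        calc (pushout.inl (maxB n) (minA l)).app k' ((maxB n).app k' pt)
            = (pushout.inr (maxB n) (minA l)).app k' ((minA l).app k' pt) := cond
          _ = (pushout.inr (maxB n) (minA l)).app k'
              (e.inv.right.app k' ((NModel l).map α (unshiftS n l f h))) := by rw [e2, e3]
          _ = (pushout.inr (maxB n) (minA l)).app k'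
              ((neckOf l).right.map α (e.inv.right.app k (unshiftS n l f h))) := by
              rw [← hnat'' (unshiftS n l f h)]
          _ = _ := hnat' (e.inv.right.app k (unshiftS n l f h))
      · show (if hh : fα.1 (Fin.last _) ≤ n then _ else _) = _
        rw [dif_neg hα]
        show _ = ((pushout (maxB n) (minA l)).map α)
          (if hh : f.1 (Fin.last _) ≤ n then _ else _)
        rw [dif_neg h]
        have : unshiftS n l fα hα = (NModel l).map α (unshiftS n l f h) := by
          apply Subtype.ext; rfl
        erw [this, hnat'' (unshiftS n l f h)]
        exact hnat' (e.inv.right.app k (unshiftS n l f h))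

lemma g_g' : e.hom.right ≫ e.inv.right = 𝟙 (neckOf l).right := by
  rw [← Under.comp_right, e.hom_inv_id]; rfl

lemma g'_g : e.inv.right ≫ e.hom.right = 𝟙 (NModel l) := by
  have : (e.inv ≫ e.hom).right = 𝟙 (NB l).right := by rw [e.inv_hom_id]; rfl
  rw [← Under.comp_right]
  exact this

/-- the comparison iso on underlying simplicial sets -/
def stepObjIso : (pushout (maxB n) (minA l) : SSet.{0}) ≅ NModel (n :: l) where
  hom := stepHom n l e
  inv := stepInv n l e
  hom_inv_id := by
    apply pushout.hom_ext
    · rw [← Category.assoc, Category.comp_id]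
      show pushout.inl (maxB n) (minA l) ≫ stepHom n l e ≫ stepInv n l e = _
      rw [← Category.assoc]
      rw [show pushout.inl (maxB n) (minA l) ≫ stepHom n l e = beadIncl n l from
        pushout.inl_desc _ _ _]
      apply NatTrans.ext
      funext k; apply ConcreteCategory.hom_ext; intro σ
      show (stepInv n l e).app k ((beadIncl n l).app k σ) = _
      have hle : ((beadIncl n l).app k σ).1 (Fin.last _) ≤ n := by
        exact Fin.is_le ((stdSimplex.objEquiv σ).toOrderHom (Fin.last _))
      show (if h : ((beadIncl n l).app k σ).1 (Fin.last _) ≤ n then _ else _) = _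
      rw [dif_pos hle]
      have : toBead n l ((beadIncl n l).app k σ) hle = σ := by
        apply stdEq; intro i; apply Fin.ext; rfl
      rw [this]
    · rw [← Category.assoc, Category.comp_id]
      show pushout.inr (maxB n) (minA l) ≫ stepHom n l e ≫ stepInv n l e = _
      rw [← Category.assoc]
      rw [show pushout.inr (maxB n) (minA l) ≫ stepHom n l e
          = e.hom.right ≫ shiftIncl n l from pushout.inr_desc _ _ _]
      apply NatTrans.ext
      funext k; apply ConcreteCategory.hom_ext; intro x
      set y := e.hom.right.app k x with hy
      show (stepInv n l e).app k ((shiftIncl n l).app k y) = (pushout.inr (maxB n) (minA l)).app k x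
      by_cases h : ((shiftIncl n l).app k y).1 (Fin.last _) ≤ n
      · -- y is constant 0, x is the base point
        have hy0 : ∀ i, y.1 i = 0 := by
          intro i
          have h2 : n + y.1 (Fin.last _) ≤ n := h
          have := y.1.monotone (Fin.le_last i)
          omega
        show (if hh : ((shiftIncl n l).app k y).1 (Fin.last _) ≤ n then _ else _) = _
        rw [dif_pos h]
        set pt : (Δ[0] : SSet.{0}).obj k := stdSimplex.const 0 0 k with hpt
        have e1 : toBead n l ((shiftIncl n l).app k y) h = (maxB n).app k pt := by
          rw [maxB_eq]
          apply stdEq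
          intro i
          apply Fin.ext
          show n + y.1 i = ((Fin.last n) : Fin (n+1)).1
          simp [hy0 i]
        have e2 : y = (vertN l 0 (Cov.self (Nat.zero_le _))).app k pt := by
          apply Subtype.ext; apply OrderHom.ext; funext i; exact hy0 i
        have hgg : e.inv.right.app k (e.hom.right.app k x) = x :=
          elemEq (g_g' l e) k x
        have e4 : x = (minA l).app k pt := by
          calc x = e.inv.right.app k (e.hom.right.app k x) := hgg.symm
            _ = e.inv.right.app k ((vertN l 0 (Cov.self (Nat.zero_le _))).app k pt) := by
                rw [← hy, ← e2]
            _ = (minA l).app k pt := elemEq (minA_g' l e) k pt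
        have cond : (pushout.inl (maxB n) (minA l)).app k ((maxB n).app k pt)
            = (pushout.inr (maxB n) (minA l)).app k ((minA l).app k pt) := by
          have := elemEq (pushout.condition (f := maxB n) (g := minA l)) k pt
          simpa using this
        rw [e1, e4]
        exact cond
      · show (if hh : ((shiftIncl n l).app k y).1 (Fin.last _) ≤ n then _ else _) = _
        rw [dif_neg h]
        have e5 : unshiftS n l ((shiftIncl n l).app k y) h = y := by
          apply Subtype.ext; apply OrderHom.ext; funext i
          show n + y.1 i - n = y.1 i
          omega
        rw [e5, hy]
        have hgg : e.inv.right.app k (e.hom.right.app k x) = x :=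
          elemEq (g_g' l e) k x
        show (pushout.inr (maxB n) (minA l)).app k (e.inv.right.app k (e.hom.right.app k x)) = _
        rw [hgg]
  inv_hom_id := by
    apply NatTrans.ext
    funext k; apply ConcreteCategory.hom_ext; intro f
    show (stepHom n l e).app k ((stepInv n l e).app k f) = f
    by_cases h : f.1 (Fin.last _) ≤ n
    · show (stepHom n l e).app k ((if hh : f.1 (Fin.last _) ≤ n then _ else _)) = f
      rw [dif_pos h]
      have h1 : (stepHom n l e).app k ((pushout.inl (maxB n) (minA l)).app k (toBead n l f h))
          = (beadIncl n l).app k (toBead n l f h) := by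
        have h0 : pushout.inl (maxB n) (minA l) ≫ stepHom n l e = beadIncl n l :=
          pushout.inl_desc _ _ _
        exact elemEq h0 k (toBead n l f h)
      rw [h1]
      apply Subtype.ext; apply OrderHom.ext; funext i
      rfl
    · show (stepHom n l e).app k ((if hh : f.1 (Fin.last _) ≤ n then _ else _)) = f
      rw [dif_neg h]
      have h1 : (stepHom n l e).app k ((pushout.inr (maxB n) (minA l)).app k
            (e.inv.right.app k (unshiftS n l f h)))
          = (e.hom.right ≫ shiftIncl n l).app k (e.inv.right.app k (unshiftS n l f h)) := by
        have h0 : pushout.inr (maxB n) (minA l) ≫ stepHom n l e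
            = e.hom.right ≫ shiftIncl n l := pushout.inr_desc _ _ _
        exact elemEq h0 k (e.inv.right.app k (unshiftS n l f h))
      rw [h1]
      have h2 : e.hom.right.app k (e.inv.right.app k (unshiftS n l f h))
          = unshiftS n l f h := elemEq (g'_g l e) k (unshiftS n l f h)
      show (shiftIncl n l).app k (e.hom.right.app k (e.inv.right.app k (unshiftS n l f h))) = f
      rw [h2]
      apply Subtype.ext; apply OrderHom.ext; funext i
      show n + (f.1 i - n) = f.1 i
      have h3 : n ≤ f.1 0 := (Cov.unshift f.2 h).1
      have := f.1.monotone (Fin.zero_le i)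
      omega

/-- the comparison iso of bi-pointed simplicial sets -/
def stepIso : wedge (bead n) (neckOf l) ≅ NB (n :: l) := by
  refine Under.isoMk (stepObjIso n l e) ?_
  apply Limits.coprod.hom_ext
  · show coprod.inl ≫ (Under.mk _).hom ≫ _ = coprod.inl ≫ (Under.mk _).hom
    simp only [Under.mk_hom]
    erw [coprod.inl_desc_assoc, coprod.inl_desc]
    show (coprod.inl ≫ (bead n).hom) ≫ pushout.inl (maxB n) (minA l) ≫ stepHom n l e
      = vertN (n :: l) 0 _
    rw [show coprod.inl ≫ (bead n).hom = SSet.stdSimplex.map (SimplexCategory.const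
      (SimplexCategory.mk 0) (SimplexCategory.mk n) 0) from coprod.inl_desc _ _]
    rw [show pushout.inl (maxB n) (minA l) ≫ stepHom n l e = beadIncl n l from
      pushout.inl_desc _ _ _]
    apply NatTrans.ext
    funext k; apply ConcreteCategory.hom_ext; intro σ
    apply Subtype.ext; apply OrderHom.ext; funext i
    rfl
  · show coprod.inr ≫ (Under.mk _).hom ≫ _ = coprod.inr ≫ (Under.mk _).hom
    simp only [Under.mk_hom]
    erw [coprod.inr_desc_assoc]
    rw [coprod.inr_desc]
    show (coprod.inr ≫ (neckOf l).hom) ≫ pushout.inr (maxB n) (minA l) ≫ stepHom n l e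
      = vertN (n :: l) (n :: l).sum _
    rw [show pushout.inr (maxB n) (minA l) ≫ stepHom n l e
      = e.hom.right ≫ shiftIncl n l from pushout.inr_desc _ _ _]
    have hmin : (coprod.inr ≫ (neckOf l).hom) ≫ e.hom.right
        = vertN l l.sum (Cov.self le_rfl) := by
      rw [Category.assoc, Under.w e.hom]
      exact coprod.inr_desc _ _
    erw [← Category.assoc]
    rw [hmin]
    apply NatTrans.ext
    funext k; apply ConcreteCategory.hom_ext; intro σ
    apply Subtype.ext; apply OrderHom.ext; funext i
    show n + l.sum = (n :: l).sum
    simp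

end Step

/-- the base-case iso -/
def unitIso : unitBi ≅ NB ([] : List ℕ) := by
  refine Under.isoMk ?_ ?_
  · refine ⟨vertN [] 0 (Cov.self (Nat.zero_le _)), ?_, ?_, ?_⟩
    · exact { app := fun k => TypeCat.ofHom fun f => stdSimplex.const 0 0 k
              naturality := fun k k' α => by
                apply ConcreteCategory.hom_ext; intro f
                apply stdEq
                intro i
                exact fin_one_eq (SimplexCategory.len_mk 0) _ _ }
    · apply NatTrans.ext
      funext k; apply ConcreteCategory.hom_ext; intro σ
      apply stdEq
      intro i
      exact fin_one_eq (SimplexCategory.len_mk 0) _ _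
    · apply NatTrans.ext
      funext k; apply ConcreteCategory.hom_ext; intro f
      apply Subtype.ext; apply OrderHom.ext; funext i
      show (0 : ℕ) = f.1 i
      have h1 : f.1 i ≤ f.1 (Fin.last _) := f.1.monotone (Fin.le_last i)
      have h2 : f.1 (Fin.last _) ≤ 0 := f.2.2
      omega
  · apply Limits.coprod.hom_ext
    · show coprod.inl ≫ (Under.mk _).hom ≫ _ = coprod.inl ≫ (Under.mk _).hom
      simp only [Under.mk_hom, coprod.inl_desc_assoc, coprod.inl_desc,
        Category.id_comp]
    · show coprod.inr ≫ (Under.mk _).hom ≫ _ = coprod.inr ≫ (Under.mk _).hom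
      simp only [Under.mk_hom, coprod.inr_desc_assoc, coprod.inr_desc,
        Category.id_comp]
      rfl

/-- every abstract necklace is isomorphic to its model -/
def isoNB : (l : List ℕ) → (neckOf l ≅ NB l) := fun l => match l with
  | [] => unitIso
  | n :: l => stepIso n l (isoNB l)

-- ### Connectedness of the slice categories

lemma Adm.comp {l1 l2 l3 : List ℕ} {w v : ℕ →o ℕ} (hv : Adm l2 l3 v) (hw : Adm l1 l2 w) :
    Adm l1 l3 (v.comp w) :=
  ⟨fun x y hxy hc => hv.cov _ _ (w.monotone hxy) (hw.cov _ _ hxy hc),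
   by simp [OrderHom.comp, hw.zero, hv.zero], by simp [OrderHom.comp, hw.top, hv.top]⟩

lemma thin_repl (m : ℕ) : (∀ a ∈ List.replicate m 1, 1 ≤ a) ∧
    (List.replicate m 1).sum ≤ (List.replicate m 1).length + 1 := by
  constructor
  · intro a ha
    rw [List.eq_of_mem_replicate ha]
  · simp

/-- unit steps of the spine map into any pattern with the same sum -/
lemma adm_spineTo (l : List ℕ) : Adm (List.replicate l.sum 1) l OrderHom.id := by
  refine ⟨?_, rfl, ?_⟩
  · intro x y hxy hc
    have hy : y ≤ x + 1 := Cov.repl_le _ _ _ _ hc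
    have hb : y ≤ 0 + (List.replicate l.sum 1).sum := hc.upper
    rw [sum_replicate_one] at hb
    exact Cov.of_unit l 0 x y (Nat.zero_le _) hxy hy (by omega)
  · show (List.replicate l.sum 1).sum = l.sum
    exact sum_replicate_one _

lemma cov_repl_unit (m : ℕ) {x y : ℕ} (hxy : x ≤ y) (h1 : y ≤ x + 1) (h2 : y ≤ m) :
    Cov (List.replicate m 1) 0 x y :=
  Cov.of_unit _ 0 x y (Nat.zero_le _) hxy h1 (by rw [sum_replicate_one]; omega)

lemma cov_repl_dest {m x y : ℕ} (hc : Cov (List.replicate m 1) 0 x y) :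
    y ≤ x + 1 ∧ y ≤ m := by
  refine ⟨Cov.repl_le _ _ _ _ hc, ?_⟩
  have := hc.upper
  rw [sum_replicate_one] at this
  omega

section Plus
variable (k j0 : ℕ)

/-- the pattern obtained from `k` unit beads by replacing the bead at `j0` with a
2-simplex bead -/
def lplus : List ℕ := List.replicate j0 1 ++ 2 :: List.replicate (k - 1 - j0) 1

lemma lplus_sum (hj0 : j0 + 1 ≤ k) : (lplus k j0).sum = k + 1 := by
  simp only [lplus, List.sum_append, List.sum_cons, sum_replicate_one]
  omega

lemma lplus_thin (hj0 : j0 + 1 ≤ k) : (∀ a ∈ lplus k j0, 1 ≤ a) ∧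
    (lplus k j0).sum ≤ (lplus k j0).length + 1 := by
  constructor
  · intro a ha
    simp only [lplus, List.mem_append, List.mem_cons] at ha
    rcases ha with h | h | h
    · rw [List.eq_of_mem_replicate h]
    · omega
    · rw [List.eq_of_mem_replicate h]
  · rw [lplus_sum k j0 hj0]
    simp only [lplus, List.length_append, List.length_cons, List.length_replicate]
    omega

lemma lplus_cov_dest (hj0 : j0 + 1 ≤ k) {x y : ℕ} (hxy : x ≤ y) (hc : Cov (lplus k j0) 0 x y) :
    (y ≤ j0 ∧ y ≤ x + 1) ∨ (j0 ≤ x ∧ y ≤ j0 + 2) ∨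
    (j0 + 2 ≤ x ∧ y ≤ x + 1 ∧ y ≤ k + 1) := by
  rcases (Cov.append_iff _ _ _ _ _).1 hc with h | h
  · left
    have h1 := Cov.repl_le _ _ _ _ h
    have h2 := h.upper
    rw [sum_replicate_one] at h2
    omega
  · rw [sum_replicate_one] at h
    rcases h with h | h
    · right; left; omega
    · right; right
      have h1 := Cov.repl_le _ _ _ _ h
      have h2 := h.lower
      have h3 := h.upper
      rw [sum_replicate_one] at h3
      omega

lemma lplus_cov_unit {x y : ℕ} (hxy : x ≤ y) (h1 : y ≤ x + 1) (h2 : y ≤ k + 1) :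
    Cov (lplus k j0) 0 x y := by
  refine (Cov.append_iff _ _ _ _ _).2 ?_
  rw [sum_replicate_one]
  by_cases hy : y ≤ j0
  · exact Or.inl (cov_repl_unit j0 hxy h1 hy)
  · refine Or.inr ?_
    by_cases hy2 : y ≤ j0 + 2
    · exact Or.inl ⟨by omega, by omega⟩
    · refine Or.inr (Cov.of_unit _ _ _ _ (by omega) hxy h1 ?_)
      rw [sum_replicate_one]
      omega

lemma lplus_cov_two {x y : ℕ} (h1 : j0 ≤ x) (h2 : y ≤ j0 + 2) :
    Cov (lplus k j0) 0 x y := by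
  refine (Cov.append_iff _ _ _ _ _).2 (Or.inr ?_)
  rw [sum_replicate_one]
  exact Or.inl ⟨by omega, by omega⟩

end Plus

-- ### vertex maps used in the zigzag

def vplusFun (v : ℕ →o ℕ) (j0 : ℕ) : ℕ → ℕ :=
  fun t => if t ≤ j0 then v t else if t = j0 + 1 then v j0 + 1 else v (t - 1)

lemma vplusFun_mono (v : ℕ →o ℕ) (j0 : ℕ) (hgap : v j0 + 2 ≤ v (j0 + 1)) :
    Monotone (vplusFun v j0) := by
  apply monotone_nat_of_le_succ
  intro t
  unfold vplusFun
  by_cases h1 : t ≤ j0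
  · by_cases h2 : t + 1 ≤ j0
    · rw [if_pos h1, if_pos h2]; exact v.monotone (by omega)
    · have ht : t = j0 := by omega
      rw [if_pos h1, if_neg h2, if_pos (by omega : t + 1 = j0 + 1), ht]
      omega
  · by_cases h2 : t = j0 + 1
    · rw [if_neg h1, if_pos h2, if_neg (by omega), if_neg (by omega : ¬ t + 1 = j0 + 1)]
      have h3 : t + 1 - 1 = j0 + 1 := by omega
      rw [h3]
      omega
    · rw [if_neg h1, if_neg h2, if_neg (by omega), if_neg (by omega)]
      exact v.monotone (by omega)

def vplusO (v : ℕ →o ℕ) (j0 : ℕ) (hgap : v j0 + 2 ≤ v (j0 + 1)) : ℕ →o ℕ :=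
  ⟨vplusFun v j0, vplusFun_mono v j0 hgap⟩

lemma vplus_le (v : ℕ →o ℕ) (j0 : ℕ) (hgap) {t : ℕ} (h : t ≤ j0) :
    vplusO v j0 hgap t = v t := if_pos h

lemma vplus_mid (v : ℕ →o ℕ) (j0 : ℕ) (hgap) : vplusO v j0 hgap (j0 + 1) = v j0 + 1 := by
  show vplusFun v j0 (j0 + 1) = _
  unfold vplusFun
  rw [if_neg (by omega), if_pos rfl]

lemma vplus_ge (v : ℕ →o ℕ) (j0 : ℕ) (hgap) {t : ℕ} (h : j0 + 2 ≤ t) :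
    vplusO v j0 hgap t = v (t - 1) := by
  show vplusFun v j0 t = _
  unfold vplusFun
  rw [if_neg (by omega), if_neg (by omega)]

def iotaO (j0 : ℕ) : ℕ →o ℕ :=
  ⟨fun t => if t ≤ j0 then t else t + 1, by
    apply monotone_nat_of_le_succ
    intro t
    split_ifs <;> omega⟩

lemma iota_le (j0 : ℕ) {t : ℕ} (h : t ≤ j0) : iotaO j0 t = t := if_pos h
lemma iota_gt (j0 : ℕ) {t : ℕ} (h : ¬ t ≤ j0) : iotaO j0 t = t + 1 := if_neg h

def sigmaO (j0 : ℕ) : ℕ →o ℕ :=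
  ⟨fun t => if t ≤ j0 then t else t - 1, by
    apply monotone_nat_of_le_succ
    intro t
    split_ifs <;> omega⟩

lemma sigma_le (j0 : ℕ) {t : ℕ} (h : t ≤ j0) : sigmaO j0 t = t := if_pos h
lemma sigma_gt (j0 : ℕ) {t : ℕ} (h : ¬ t ≤ j0) : sigmaO j0 t = t - 1 := if_neg h

section AdmLemmas
variable {k j0 : ℕ} {v : ℕ →o ℕ} {L : List ℕ}

lemma admPlus (hj0k : j0 + 1 ≤ k) (hgap : v j0 + 2 ≤ v (j0 + 1))
    (hv : Adm (List.replicate k 1) L v) :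
    Adm (lplus k j0) L (vplusO v j0 hgap) := by
  refine ⟨?_, ?_, ?_⟩
  · intro x y hxy hc
    rcases lplus_cov_dest k j0 hj0k hxy hc with ⟨h1, h2⟩ | ⟨h1, h2⟩ | ⟨h1, h2, h3⟩
    · rw [vplus_le v j0 hgap (le_trans hxy h1), vplus_le v j0 hgap h1]
      exact hv.cov x y hxy (cov_repl_unit k hxy h2 (by omega))
    · have hL : Cov L 0 (v j0) (v (j0 + 1)) :=
        hv.cov j0 (j0 + 1) (by omega) (cov_repl_unit k (by omega) (by omega) (by omega))
      refine Cov.mono hL ?_ ?_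
      · have := (vplusO v j0 hgap).monotone h1
        rwa [vplus_le v j0 hgap le_rfl] at this
      · have := (vplusO v j0 hgap).monotone h2
        rwa [vplus_ge v j0 hgap (by omega : j0 + 2 ≤ j0 + 2),
          (by omega : j0 + 2 - 1 = j0 + 1)] at this
    · rw [vplus_ge v j0 hgap h1, vplus_ge v j0 hgap (by omega)]
      exact hv.cov (x - 1) (y - 1) (by omega)
        (cov_repl_unit k (by omega) (by omega) (by omega))
  · rw [vplus_le v j0 hgap (Nat.zero_le _)]
    exact hv.zero
  · rw [lplus_sum k j0 hj0k, vplus_ge v j0 hgap (by omega),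
      (by omega : k + 1 - 1 = k)]
    have := hv.top
    rwa [sum_replicate_one] at this

lemma admIota (hj0k : j0 + 1 ≤ k) :
    Adm (List.replicate k 1) (lplus k j0) (iotaO j0) := by
  refine ⟨?_, ?_, ?_⟩
  · intro x y hxy hc
    obtain ⟨h1, h2⟩ := cov_repl_dest hc
    by_cases hy : y ≤ j0
    · rw [iota_le j0 (le_trans hxy hy), iota_le j0 hy]
      exact lplus_cov_unit k j0 hxy h1 (by omega)
    · by_cases hx : x ≤ j0
      · have hx' : x = j0 := by omega
        have hy' : y = j0 + 1 := by omega
        rw [iota_le j0 hx, iota_gt j0 hy, hx', hy']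
        exact lplus_cov_two k j0 le_rfl le_rfl
      · rw [iota_gt j0 hx, iota_gt j0 hy]
        exact lplus_cov_unit k j0 (by omega) (by omega) (by omega)
  · rw [iota_le j0 (Nat.zero_le _)]
  · rw [sum_replicate_one, iota_gt j0 (by omega), lplus_sum k j0 hj0k]

lemma admIdPlus (hj0k : j0 + 1 ≤ k) :
    Adm (List.replicate (k + 1) 1) (lplus k j0) OrderHom.id := by
  refine ⟨?_, rfl, ?_⟩
  · intro x y hxy hc
    obtain ⟨h1, h2⟩ := cov_repl_dest hc
    exact lplus_cov_unit k j0 hxy h1 h2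
  · rw [sum_replicate_one, lplus_sum k j0 hj0k]; rfl

lemma admSigma (hj0k : j0 ≤ k) :
    Adm (List.replicate (k + 1) 1) (List.replicate k 1) (sigmaO j0) := by
  refine ⟨?_, ?_, ?_⟩
  · intro x y hxy hc
    obtain ⟨h1, h2⟩ := cov_repl_dest hc
    by_cases hy : y ≤ j0
    · rw [sigma_le j0 (le_trans hxy hy), sigma_le j0 hy]
      exact cov_repl_unit k hxy h1 (by omega)
    · by_cases hx : x ≤ j0
      · rw [sigma_le j0 hx, sigma_gt j0 hy]
        exact cov_repl_unit k (by omega) (by omega) (by omega)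
      · rw [sigma_gt j0 hx, sigma_gt j0 hy]
        exact cov_repl_unit k (by omega) (by omega) (by omega)
  · rw [sigma_le j0 (Nat.zero_le _)]
  · rw [sum_replicate_one, sum_replicate_one, sigma_gt j0 (by omega)]
    omega

lemma admVprime (hj0k : j0 ≤ k) (hdeg : v (j0 + 1) = v j0)
    (hv : Adm (List.replicate (k + 1) 1) L v) :
    Adm (List.replicate k 1) L (v.comp (iotaO j0)) := by
  refine ⟨?_, ?_, ?_⟩
  · intro x y hxy hc
    obtain ⟨h1, h2⟩ := cov_repl_dest hc
    show Cov L 0 (v (iotaO j0 x)) (v (iotaO j0 y))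
    by_cases hy : y ≤ j0
    · rw [iota_le j0 (le_trans hxy hy), iota_le j0 hy]
      exact hv.cov x y hxy (cov_repl_unit (k + 1) hxy h1 (by omega))
    · by_cases hx : x ≤ j0
      · have hx' : x = j0 := by omega
        have hy' : y = j0 + 1 := by omega
        rw [iota_le j0 hx, iota_gt j0 hy, hx', hy', ← hdeg]
        exact hv.cov (j0 + 1) (j0 + 2) (by omega)
          (cov_repl_unit (k + 1) (by omega) (by omega) (by omega))
      · rw [iota_gt j0 hx, iota_gt j0 hy]
        exact hv.cov (x + 1) (y + 1) (by omega)
          (cov_repl_unit (k + 1) (by omega) (by omega) (by omega))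
  · show v (iotaO j0 0) = 0
    rw [iota_le j0 (Nat.zero_le _)]
    exact hv.zero
  · show v (iotaO j0 (List.replicate k 1).sum) = L.sum
    rw [sum_replicate_one]
    have htop := hv.top
    rw [sum_replicate_one] at htop
    by_cases hk : k ≤ j0
    · have hjk : j0 = k := by omega
      rw [iota_le j0 hk, ← htop]
      subst hjk
      exact hdeg.symm
    · rw [iota_gt j0 hk]
      exact htop

end AdmLemmas

section Conn
variable (N : Nec) (L : List ℕ) (E : N.obj ≅ NB L)

/-- thin necklace objects built from explicit patterns -/
def mkThin (l : List ℕ) (h1 : ∀ a ∈ l, 1 ≤ a) (h2 : l.sum ≤ l.length + 1) : NecThin :=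
  ⟨⟨NB l, ⟨l, ⟨(isoNB l).symm⟩⟩⟩, ⟨l, h1, h2, ⟨(isoNB l).symm⟩⟩⟩

/-- objects of the slice category built from admissible vertex maps -/
def mkObj (l : List ℕ) (h1 : ∀ a ∈ l, 1 ≤ a) (h2 : l.sum ≤ l.length + 1)
    (v : ℕ →o ℕ) (hv : Adm l L v) : CostructuredArrow thinInclusion N :=
  CostructuredArrow.mk (Y := mkThin l h1 h2)
    (ObjectProperty.homMk (show NB l ⟶ N.obj from indB v hv ≫ E.inv))

/-- morphisms in the slice category from admissible vertex maps -/
def mkHom (l l' : List ℕ) (h1 h2 h1' h2') (v v' w : ℕ →o ℕ)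
    (hv : Adm l L v) (hv' : Adm l' L v') (hw : Adm l l' w)
    (heq : ∀ x, x ≤ l.sum → v' (w x) = v x) :
    mkObj N L E l h1 h2 v hv ⟶ mkObj N L E l' h1' h2' v' hv' :=
  CostructuredArrow.homMk (show mkThin l h1 h2 ⟶ mkThin l' h1' h2' from
    ObjectProperty.homMk (ObjectProperty.homMk (indB w hw))) (by
    apply ObjectProperty.hom_ext
    show indB w hw ≫ (indB v' hv' ≫ E.inv) = indB v hv ≫ E.inv
    rw [← Category.assoc, indB_comp]
    congr 1
    exact indB_congr _ _ _ _ heq)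

/-- the base object: the spine of `N` -/
def baseObj : CostructuredArrow thinInclusion N :=
  mkObj N L E (List.replicate L.sum 1) (thin_repl L.sum).1 (thin_repl L.sum).2
    OrderHom.id (adm_spineTo L)

/-- slice objects over spines -/
abbrev sObj (k : ℕ) (v : ℕ →o ℕ) (hv : Adm (List.replicate k 1) L v) :
    CostructuredArrow thinInclusion N :=
  mkObj N L E (List.replicate k 1) (thin_repl k).1 (thin_repl k).2 v hv

lemma sObj_eq_base (k : ℕ) (v : ℕ →o ℕ) (hv : Adm (List.replicate k 1) L v)
    (hk : k = L.sum) (hid : ∀ x, x ≤ k → v x = x) :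
    sObj N L E k v hv = baseObj N L E := by
  subst hk
  have h9 : indB v hv = indB OrderHom.id (adm_spineTo L) := by
    apply indB_congr
    intro x hx
    rw [sum_replicate_one] at hx
    exact hid x hx
  show mkObj N L E _ _ _ v hv = mkObj N L E _ _ _ OrderHom.id (adm_spineTo L)
  unfold mkObj
  rw [h9]

lemma phaseB : ∀ (j k : ℕ) (v : ℕ →o ℕ) (hv : Adm (List.replicate k 1) L v)
    (hst : ∀ i, i < k → v i < v (i + 1)) (hj : L.sum - k ≤ j),
    Zigzag (sObj N L E k v hv) (baseObj N L E) := by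
  have strictFacts : ∀ (k : ℕ) (v : ℕ →o ℕ), Adm (List.replicate k 1) L v →
      (∀ i, i < k → v i < v (i + 1)) →
      (∀ i, i ≤ k → i ≤ v i) ∧ (∀ d i, i + d ≤ k → v i + d ≤ v (i + d)) ∧ v k = L.sum := by
    intro k v hv hst
    have hvk : v k = L.sum := by
      have := hv.top; rwa [sum_replicate_one] at this
    refine ⟨?_, ?_, hvk⟩
    · intro i hi
      induction i with
      | zero => simp [hv.zero]
      | succ i ih =>
        have h1 := hst i (by omega)
        have h2 := ih (by omega)
        omega
    · intro d
      induction d with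
      | zero => intro i h; simp
      | succ d ih =>
        intro i h
        have h1 := ih i (by omega)
        have h2 := hst (i + d) (by omega)
        have h3 : i + (d + 1) = (i + d) + 1 := by omega
        rw [h3]
        omega
  have terminal : ∀ (k : ℕ) (v : ℕ →o ℕ) (hv : Adm (List.replicate k 1) L v)
      (hst : ∀ i, i < k → v i < v (i + 1)) (hall : ∀ i, i < k → v (i + 1) = v i + 1),
      sObj N L E k v hv = baseObj N L E := by
    intro k v hv hst hall
    have hid : ∀ x, x ≤ k → v x = x := by
      intro x hx
      induction x with
      | zero => exact hv.zero
      | succ x ih =>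
        have h1 := hall x (by omega)
        have h2 := ih (by omega)
        omega
    have hvk : v k = L.sum := (strictFacts k v hv hst).2.2
    have hk : k = L.sum := by
      have := hid k le_rfl; omega
    exact sObj_eq_base N L E k v hv hk hid
  intro j
  induction j with
  | zero =>
    intro k v hv hst hj
    obtain ⟨hge, hgap, hvk⟩ := strictFacts k v hv hst
    have hk : k = L.sum := by
      have := hge k le_rfl; omega
    have hid : ∀ x, x ≤ k → v x = x := by
      intro x hx
      have h1 := hge x hx
      have h2 := hgap (k - x) x (by omega)
      have h3 : x + (k - x) = k := by omega
      rw [h3] at h2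
      omega
    rw [sObj_eq_base N L E k v hv hk hid]
  | succ j ih =>
    intro k v hv hst hj
    by_cases hall : ∀ i, i < k → v (i + 1) = v i + 1
    · rw [terminal k v hv hst hall]
    · push_neg at hall
      obtain ⟨j0, hj0k, hne⟩ := hall
      have hgap : v j0 + 2 ≤ v (j0 + 1) := by
        have := hst j0 hj0k; omega
      have hj0k' : j0 + 1 ≤ k := hj0k
      -- the new vertex map on k+1 unit beads
      set w : ℕ →o ℕ := vplusO v j0 hgap with hw
      have hvP : Adm (lplus k j0) L w := admPlus hj0k' hgap hv
      have hvW : Adm (List.replicate (k + 1) 1) L w :=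
        ⟨fun x y hxy hc => by
          obtain ⟨h1, h2⟩ := cov_repl_dest hc
          exact hvP.cov x y hxy (lplus_cov_unit k j0 hxy h1 h2),
         by rw [hw]; rw [vplus_le v j0 hgap (Nat.zero_le _)]; exact hv.zero,
         by rw [sum_replicate_one, hw, vplus_ge v j0 hgap (by omega),
              (by omega : k + 1 - 1 = k)]
            have := hv.top; rwa [sum_replicate_one] at this⟩
      -- two morphisms into the lplus object
      have m1 : sObj N L E k v hv ⟶
          mkObj N L E (lplus k j0) (lplus_thin k j0 hj0k').1 (lplus_thin k j0 hj0k').2 w hvP :=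
        mkHom N L E _ _ _ _ _ _ v w (iotaO j0) hv hvP (admIota hj0k') (by
          intro x hx
          by_cases h : x ≤ j0
          · rw [iota_le j0 h, hw, vplus_le v j0 hgap h]
          · rw [iota_gt j0 h, hw, vplus_ge v j0 hgap (by omega),
              (by omega : x + 1 - 1 = x)])
      have m2 : sObj N L E (k + 1) w hvW ⟶
          mkObj N L E (lplus k j0) (lplus_thin k j0 hj0k').1 (lplus_thin k j0 hj0k').2 w hvP :=
        mkHom N L E _ _ _ _ _ _ w w OrderHom.id hvW hvP (admIdPlus hj0k')
          (fun x _ => rfl)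
      -- new strictness
      have hst2 : ∀ i, i < k + 1 → w i < w (i + 1) := by
        intro i hi
        rcases Nat.lt_trichotomy i j0 with h | h | h
        · rw [hw, vplus_le v j0 hgap (by omega), vplus_le v j0 hgap (by omega)]
          exact hst i (by omega)
        · subst h
          rw [hw, vplus_le v i hgap le_rfl, vplus_mid v i hgap]
          omega
        · by_cases h2 : i = j0 + 1
          · subst h2
            rw [hw, vplus_mid v j0 hgap,
              vplus_ge v j0 hgap (by omega : j0 + 2 ≤ j0 + 1 + 1),
              (by omega : j0 + 1 + 1 - 1 = j0 + 1)]
            omega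
          · rw [hw, vplus_ge v j0 hgap (by omega), vplus_ge v j0 hgap (by omega),
              (by omega : i + 1 - 1 = i)]
            have := hst (i - 1) (by omega)
            rwa [(by omega : i - 1 + 1 = i)] at this
      have hz : Zigzag (sObj N L E k v hv) (sObj N L E (k + 1) w hvW) :=
        Relation.ReflTransGen.tail (Relation.ReflTransGen.single (Or.inl ⟨m1⟩)) (Or.inr ⟨m2⟩)
      exact hz.trans (ih (k + 1) w hvW hst2 (by omega))

lemma phaseA : ∀ (k : ℕ) (v : ℕ →o ℕ) (hv : Adm (List.replicate k 1) L v),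
    Zigzag (sObj N L E k v hv) (baseObj N L E) := by
  intro k
  induction k with
  | zero =>
    intro v hv
    exact phaseB N L E L.sum 0 v hv (fun i hi => by omega) (by omega)
  | succ k ih =>
    intro v hv
    by_cases hst : ∀ i, i < k + 1 → v i < v (i + 1)
    · exact phaseB N L E L.sum (k + 1) v hv hst (by omega)
    · push_neg at hst
      obtain ⟨j0, hj0k, hle⟩ := hst
      have hdeg : v (j0 + 1) = v j0 :=
        le_antisymm hle (v.monotone (by omega))
      have hj0 : j0 ≤ k := by omega
      have hv' : Adm (List.replicate k 1) L (v.comp (iotaO j0)) := admVprime hj0 hdeg hv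
      have m : sObj N L E (k + 1) v hv ⟶ sObj N L E k (v.comp (iotaO j0)) hv' :=
        mkHom N L E _ _ _ _ _ _ v (v.comp (iotaO j0)) (sigmaO j0) hv hv' (admSigma hj0) (by
          intro x hx
          show v (iotaO j0 (sigmaO j0 x)) = v x
          rcases Nat.lt_trichotomy x (j0 + 1) with h | h | h
          · rw [sigma_le j0 (by omega), iota_le j0 (by omega)]
          · rw [h, sigma_gt j0 (by omega), (by omega : j0 + 1 - 1 = j0),
              iota_le j0 le_rfl]
            exact hdeg.symm
          · rw [sigma_gt j0 (by omega), iota_gt j0 (by omega), (by omega : x - 1 + 1 = x)])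
      exact Relation.ReflTransGen.trans
        (Relation.ReflTransGen.single (Or.inl ⟨m⟩)) (ih (v.comp (iotaO j0)) hv')

lemma toBase (X : CostructuredArrow thinInclusion N) : Zigzag X (baseObj N L E) := by
  obtain ⟨l, h1, h2, ⟨u⟩⟩ := X.left.property
  let u' : (X.left.obj).obj ≅ NB l := u ≪≫ isoNB l
  obtain ⟨v, hv, hvg⟩ :=
    exists_adm (u'.inv ≫ (show X.left.obj.obj ⟶ N.obj from X.hom.hom) ≫ E.hom)
  have hcomp : indB v hv ≫ E.inv
      = u'.inv ≫ (show X.left.obj.obj ⟶ N.obj from X.hom.hom) := by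
    rw [← hvg, Category.assoc, Category.assoc, E.hom_inv_id, Category.comp_id]
  have m : mkObj N L E l h1 h2 v hv ⟶ X :=
    CostructuredArrow.homMk (show mkThin l h1 h2 ⟶ X.left from
      ObjectProperty.homMk (ObjectProperty.homMk u'.inv)) (by
      apply ObjectProperty.hom_ext
      exact hcomp.symm)
  have hv2 : Adm (List.replicate l.sum 1) L v :=
    ⟨fun x y hxy hc => hv.cov x y hxy ((adm_spineTo l).cov x y hxy hc),
     hv.zero, by rw [sum_replicate_one]; exact hv.top⟩
  have m2 : sObj N L E l.sum v hv2 ⟶ mkObj N L E l h1 h2 v hv :=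
    mkHom N L E _ _ _ _ _ _ v v OrderHom.id hv2 hv (adm_spineTo l) (fun x _ => rfl)
  exact Relation.ReflTransGen.trans
    (Relation.ReflTransGen.single (Or.inr ⟨m⟩))
    (Relation.ReflTransGen.trans (Relation.ReflTransGen.single (Or.inr ⟨m2⟩))
      (phaseA N L E l.sum v hv2))

end Conn

lemma conn (N : Nec) (L : List ℕ) (E : N.obj ≅ NB L) :
    IsConnected (CostructuredArrow thinInclusion N) := by
  haveI : Nonempty (CostructuredArrow thinInclusion N) := ⟨baseObj N L E⟩
  apply zigzag_isConnected
  intro X Y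
  exact (toBase N L E X).trans (zigzag_symmetric.symm _ _ (toBase N L E Y))

end NkAux

/-- The inclusion `Nec_thinᵒᵖ ↪ Necᵒᵖ` is 1-final: every slice category
`Nec_{thin/N}` is connected; consequently the colimit of any functor
`F : Necᵒᵖ ⥤ C` to a 1-category agrees with the colimit of its restriction to
`Nec_thinᵒᵖ`. -/
theorem stmt_7 :
    (∀ N : Nec, IsConnected (CostructuredArrow thinInclusion N)) ∧
    thinInclusion.op.Final ∧
    ∀ (C : Type) (_ : SmallCategory C) (F : Necᵒᵖ ⥤ C)
      (_ : HasColimit F) (_ : HasColimit (thinInclusion.op ⋙ F)),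
      Nonempty (colimit (thinInclusion.op ⋙ F) ≅ colimit F) := by
  have key : ∀ N : Nec, IsConnected (CostructuredArrow thinInclusion N) := by
    intro N
    obtain ⟨L, ⟨eN⟩⟩ := N.property
    exact NkAux.conn N L (eN ≪≫ NkAux.isoNB L)
  refine ⟨key, ?_, ?_⟩
  · haveI : thinInclusion.Initial := ⟨key⟩
    infer_instance
  · intro C instC F hF hF'
    haveI := hF
    haveI := hF'
    haveI : thinInclusion.Initial := ⟨key⟩
    exact ⟨Functor.Final.colimitIso thinInclusion.op F⟩

end
end

section
/- Let X be a simplicial set. Then the set of morphisms of the homotopy category ho(X) is in bijection with the quotient (⨆_{n ≥ 0} X₁ ×_{X₀} ⋯ ×_{X₀} X₁)/∼ of composable strings of edges of X, where ∼ is the equivalence relation generated by: (f₁, …, f_n) ∼ (f₁, …, f_{i-1}, g, f_{i+2}, …, f_n) whenever there is a 2-simplex of X with faces f_i, f_{i+1}, g witnessing g = f_{i+1} ∘ f_i, and (f₁, …, f_n) ∼ (f₁, …, f_{i-1}, f_{i+1}, …, f_n) whenever f_i is a degenerate 1-simplex. -/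
open CategoryTheory

local notation:1000 X " _⦋" n "⦌" => Prefunctor.obj (Functor.toPrefunctor (X : SimplicialObject _)) (Opposite.op (SimplexCategory.mk n))

variable (X : SSet.{0})

/-- The vertices of `X`, as the underlying type of the graph of `0`- and `1`-simplices. -/
def HoVert : Type := X _⦋0⦌

instance : Quiver (HoVert X) :=
  ⟨fun a b => {e : X _⦋1⦌ // X.δ 1 e = a ∧ X.δ 0 e = b}⟩

/-- The relations on the free category on the edges of `X`: composition witnessed by
`2`-simplices, and degenerate edges are identities. -/
inductive HoRel : HomRel (Paths (HoVert X))
  | tri {a b c : HoVert X} (f : a ⟶ b) (g : b ⟶ c) (h : a ⟶ c) (σ : X _⦋2⦌)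
      (hf : X.δ 2 σ = f.1) (hg : X.δ 0 σ = g.1) (hh : X.δ 1 σ = h.1) :
      HoRel (f.toPath ≫ g.toPath) h.toPath
  | degen (a : HoVert X) (f : a ⟶ a) (hf : X.σ 0 a = f.1) :
      HoRel f.toPath (𝟙 ((Paths.of (HoVert X)).obj a))

/-- The homotopy category `ho(X)` of a simplicial set `X`: the free category on the
edges of `X` modulo the relations generated by the `2`-simplices and the degenerate
`1`-simplices (this is the value at `X` of the left adjoint of the nerve). -/
def HoCat : Type := CategoryTheory.Quotient (HoRel X)

noncomputable instance : Category (HoCat X) :=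
  inferInstanceAs (Category (CategoryTheory.Quotient (HoRel X)))

/-- `EdgeChain X x y l` says that `l` is a composable string of edges of `X`
from `x` to `y`; for `l = []` this requires `x = y` (the `n = 0` term `X₀`). -/
def EdgeChain (x y : X _⦋0⦌) : List (X _⦋1⦌) → Prop
  | [] => x = y
  | e :: l => X.δ 1 e = x ∧ EdgeChain (X.δ 0 e) y l

/-- Composable strings of edges of `X`: the disjoint union over `n ≥ 0` of
`X₁ ×_{X₀} ⋯ ×_{X₀} X₁`. -/
def Strings : Type :=
  Σ x y : X _⦋0⦌, {l : List (X.obj (Opposite.op (SimplexCategory.mk 1))) // EdgeChain X x y l}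

/-- The generating relations on strings: composing two consecutive edges along a
`2`-simplex, and deleting a degenerate edge. -/
inductive StrRel : Strings X → Strings X → Prop
  | tri (x y : X _⦋0⦌) (pre post : List (X _⦋1⦌)) (f g h : X _⦋1⦌) (σ : X _⦋2⦌)
      (hf : X.δ 2 σ = f) (hg : X.δ 0 σ = g) (hh : X.δ 1 σ = h)
      (hc : EdgeChain X x y (pre ++ f :: g :: post))
      (hc' : EdgeChain X x y (pre ++ h :: post)) :
      StrRel ⟨x, y, pre ++ f :: g :: post, hc⟩ ⟨x, y, pre ++ h :: post, hc'⟩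
  | degen (x y v : X _⦋0⦌) (pre post : List (X _⦋1⦌))
      (hc : EdgeChain X x y (pre ++ (X.σ 0 v :: post : List (X _⦋1⦌))))
      (hc' : EdgeChain X x y (pre ++ post)) :
      StrRel ⟨x, y, pre ++ (X.σ 0 v :: post : List (X _⦋1⦌)), hc⟩ ⟨x, y, pre ++ post, hc'⟩

namespace StmtAux

variable {X : SSet.{0}}

lemma dzs (v : X _⦋0⦌) : X.δ 0 (X.σ 0 v) = v :=
  X.δ_comp_σ_self_apply 0 v

lemma dos (v : X _⦋0⦌) : X.δ 1 (X.σ 0 v) = v :=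
  X.δ_comp_σ_succ_apply 0 v

lemma chain_src_unique : ∀ (l : List (X _⦋1⦌)) {x x' y : X _⦋0⦌},
    EdgeChain X x y l → EdgeChain X x' y l → x = x'
  | [], _, _, _, h, h' => h.trans h'.symm
  | _ :: _, _, _, _, h, h' => h.1.symm.trans h'.1

lemma chain_tgt_unique : ∀ (l : List (X _⦋1⦌)) {x y y' : X _⦋0⦌},
    EdgeChain X x y l → EdgeChain X x y' l → y = y'
  | [], _, _, _, h, h' => h.symm.trans h'
  | _ :: l, _, _, _, h, h' => chain_tgt_unique l h.2 h'.2

lemma chain_append {l₁ l₂ : List (X _⦋1⦌)} {x m y : X _⦋0⦌}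
    (h₁ : EdgeChain X x m l₁) (h₂ : EdgeChain X m y l₂) :
    EdgeChain X x y (l₁ ++ l₂) := by
  induction l₁ generalizing x with
  | nil => exact h₁ ▸ h₂
  | cons e l ih => exact ⟨h₁.1, ih h₁.2⟩

lemma chain_split : ∀ (l₁ : List (X _⦋1⦌)) {l₂ : List (X _⦋1⦌)} {x y : X _⦋0⦌},
    EdgeChain X x y (l₁ ++ l₂) → ∃ m, EdgeChain X x m l₁ ∧ EdgeChain X m y l₂
  | [], _, x, _, h => ⟨x, rfl, h⟩
  | e :: l, l₂, _, _, h => by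
      obtain ⟨m, h1, h2⟩ := chain_split l h.2
      exact ⟨m, ⟨h.1, h1⟩, h2⟩

/-- An edge of `X` as a morphism in the quiver `HoVert X`. -/
def edge {a b : HoVert X} (e : X _⦋1⦌) (h1 : X.δ 1 e = a) (h2 : X.δ 0 e = b) : a ⟶ b :=
  ⟨e, h1, h2⟩

/-- The morphism in the path category associated to a composable string of edges. -/
def toHom : ∀ (l : List (X _⦋1⦌)) {x y : HoVert X}, EdgeChain X x y l →
    ((Paths.of (HoVert X)).obj x ⟶ (Paths.of (HoVert X)).obj y)
  | [], _, _, h => eqToHom (congrArg _ h)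
  | e :: l, _, _, h => (edge e h.1 rfl).toPath ≫ toHom l h.2

@[simp] lemma toHom_nil {x : HoVert X} (h : EdgeChain X x x []) :
    toHom [] h = 𝟙 ((Paths.of (HoVert X)).obj x) := by
  simp [toHom]

lemma toHom_congr_src {x x' y : HoVert X} (e : x = x') (l : List (X _⦋1⦌))
    (h : EdgeChain X x y l) (h' : EdgeChain X x' y l) :
    toHom l h = eqToHom (congrArg (Paths.of (HoVert X)).obj e) ≫ toHom l h' := by
  subst e; simp

lemma toHom_append : ∀ (l₁ : List (X _⦋1⦌)) {l₂ : List (X _⦋1⦌)} {x m y : HoVert X}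
    (h₁ : EdgeChain X x m l₁) (h₂ : EdgeChain X m y l₂) (h : EdgeChain X x y (l₁ ++ l₂)),
    toHom (l₁ ++ l₂) h = toHom l₁ h₁ ≫ toHom l₂ h₂
  | [], l₂, x, m, y, h₁, h₂, h => by
      subst h₁
      show toHom l₂ h₂ = toHom [] rfl ≫ toHom l₂ h₂
      exact (Category.id_comp _).symm
  | e :: l, l₂, x, m, y, h₁, h₂, h => by
      show _ ≫ toHom (l ++ l₂) _ = (_ ≫ toHom l _) ≫ _
      rw [toHom_append l h₁.2 h₂ h.2]; exact (Category.assoc _ _ _).symm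

lemma toPath_congr {a a' b b' : HoVert X} (ea : a = a') (eb : b = b') (e : X _⦋1⦌)
    (h1 : X.δ 1 e = a) (h2 : X.δ 0 e = b) (h1' : X.δ 1 e = a') (h2' : X.δ 0 e = b') :
    (edge e h1 h2).toPath =
      eqToHom (congrArg (Paths.of (HoVert X)).obj ea) ≫ (edge e h1' h2').toPath ≫
        eqToHom (congrArg (Paths.of (HoVert X)).obj eb.symm) := by
  subst ea; subst eb; rfl

lemma sigma_congr {C : Type} [Category C] {a b : C} {f g : a ⟶ b} (h : f = g) :
    (⟨a, b, f⟩ : Σ a b : C, a ⟶ b) = ⟨a, b, g⟩ := by rw [h]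

lemma eqToHom_sandwich {C : Type} [Category C] {a b c d : C} (f : a ⟶ b) (p : b = c)
    (q : c = b) (t : b ⟶ d) : (𝟙 a ≫ f ≫ eqToHom p) ≫ eqToHom q ≫ t = f ≫ t := by
  simp

/-- The underlying map from strings to morphisms of the homotopy category. -/
def Fcore (s : Strings X) : Σ a b : HoCat X, a ⟶ b :=
  ⟨(Quotient.functor (HoRel X)).obj ((Paths.of (HoVert X)).obj s.1),
   (Quotient.functor (HoRel X)).obj ((Paths.of (HoVert X)).obj s.2.1),
   (Quotient.functor (HoRel X)).map (toHom s.2.2.1 s.2.2.2)⟩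

lemma F_rel {s t : Strings X} (hst : StrRel X s t) : Fcore s = Fcore t := by
  cases hst with
  | tri x y pre post f g h σ hf hg hh hc hc' =>
      obtain ⟨m, hpre, hrest⟩ := chain_split pre hc
      obtain ⟨m', hpre', hrest'⟩ := chain_split pre hc'
      obtain rfl : m' = m := chain_tgt_unique pre hpre' hpre
      have e0 : X.δ 0 h = X.δ 0 g := chain_src_unique post hrest'.2 hrest.2.2
      refine sigma_congr ?_
      rw [toHom_append pre hpre hrest hc, toHom_append pre hpre' hrest' hc']
      have erhs : toHom (h :: post) hrest' =
          (edge h hrest'.1 e0).toPath ≫ toHom post hrest.2.2 := by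
        show (edge h hrest'.1 rfl).toPath ≫ toHom post hrest'.2 = _
        rw [toPath_congr rfl e0 h hrest'.1 rfl hrest'.1 e0,
          toHom_congr_src e0 post hrest'.2 hrest.2.2]
        exact eqToHom_sandwich _ _ _ _
      have elhs : toHom pre hpre ≫ toHom (f :: g :: post) hrest =
          toHom pre hpre ≫ ((edge f hrest.1 rfl).toPath ≫ (edge g hrest.2.1 rfl).toPath) ≫
            toHom post hrest.2.2 := by
        show toHom pre hpre ≫ (edge f hrest.1 rfl).toPath ≫ (edge g hrest.2.1 rfl).toPath ≫
          toHom post hrest.2.2 = _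
        exact congrArg _ (Category.assoc _ _ _).symm
      rw [erhs, elhs]
      exact Quot.sound (HomRel.CompClosure.intro _ _ (toHom pre hpre) _ _
        (toHom post hrest.2.2)
        (HoRel.tri (edge f hrest.1 rfl) (edge g hrest.2.1 rfl) (edge h hrest'.1 e0) σ hf hg hh))
  | degen x y v pre post hc hc' =>
      obtain ⟨m, hpre, hrest⟩ := chain_split pre hc
      obtain ⟨m', hpre', hpost'⟩ := chain_split pre hc'
      obtain rfl : m' = m := chain_tgt_unique pre hpre' hpre
      obtain rfl : v = m' := (dos v).symm.trans hrest.1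
      refine sigma_congr ?_
      rw [toHom_append pre hpre hrest hc, toHom_append pre hpre' hpost' hc']
      have elhs : toHom (X.σ 0 v :: post) hrest =
          (edge (X.σ 0 v) (dos v) (dzs v)).toPath ≫ toHom post hpost' := by
        show (edge (X.σ 0 v) hrest.1 rfl).toPath ≫ toHom post hrest.2 = _
        rw [toPath_congr rfl (dzs v) (X.σ 0 v) hrest.1 rfl (dos v) (dzs v),
          toHom_congr_src (dzs v) post hrest.2 hpost']
        exact eqToHom_sandwich _ _ _ _
      rw [elhs]
      have keq := Quot.sound (HomRel.CompClosure.intro _ _ (toHom pre hpre)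
        (edge (X.σ 0 v) (dos v) (dzs v)).toPath (𝟙 ((Paths.of (V := HoVert X)).obj v)) (toHom post hpost')
        (HoRel.degen v (edge (X.σ 0 v) (dos v) (dzs v)) rfl))
      exact keq.trans (congrArg (Quot.mk _) (by exact congrArg _ (Category.id_comp _)))

/-- The map from the quotient of strings to morphisms of `ho(X)`. -/
def F : Quot (StrRel X) → Σ a b : HoCat X, a ⟶ b :=
  Quot.lift Fcore fun _ _ h => F_rel h

/-- The list of edges underlying a path. -/
def pathToList : ∀ {x y : HoVert X}, Quiver.Path x y → List (X _⦋1⦌)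
  | _, _, .nil => []
  | _, _, .cons p e => pathToList p ++ [e.1]

@[simp] lemma pathToList_nil {x : HoVert X} :
    pathToList (Quiver.Path.nil : Quiver.Path x x) = [] := by simp [pathToList]

@[simp] lemma pathToList_cons {x y z : HoVert X} (p : Quiver.Path x y) (e : y ⟶ z) :
    pathToList (p.cons e) = pathToList p ++ [e.1] := by simp [pathToList]

@[simp] lemma pathToList_id {x : Paths (HoVert X)} : pathToList (𝟙 x) = [] := pathToList_nil

@[simp] lemma pathToList_toPath {x y : HoVert X} (e : x ⟶ y) :
    pathToList e.toPath = [e.1] := by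
  show pathToList (Quiver.Path.nil.cons e) = [e.1]
  rw [pathToList_cons, pathToList_nil]; rfl

lemma comp_eq_comp {x y z : Paths (HoVert X)} (p : x ⟶ y) (q : y ⟶ z) :
    p ≫ q = Quiver.Path.comp p q := by exact rfl

lemma chain_single {a b : HoVert X} (e : a ⟶ b) : EdgeChain X a b [e.1] :=
  ⟨e.2.1, e.2.2⟩

lemma pathToList_chain : ∀ {x y : HoVert X} (p : Quiver.Path x y),
    EdgeChain X x y (pathToList p)
  | _, _, .nil => by rw [pathToList_nil]; exact rfl
  | _, _, .cons p e => by
      rw [pathToList_cons]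
      exact chain_append (pathToList_chain p) (chain_single e)

lemma pathToList_comp' {x y z : HoVert X} (p : Quiver.Path x y) (q : Quiver.Path y z) :
    pathToList (p.comp q) = pathToList p ++ pathToList q := by
  induction q with
  | nil => simp
  | cons q e ih =>
      rw [Quiver.Path.comp_cons, pathToList_cons, ih, pathToList_cons, List.append_assoc]

lemma pathToList_comp {x y z : Paths (HoVert X)} (p : x ⟶ y) (q : y ⟶ z) :
    pathToList (p ≫ q) = pathToList p ++ pathToList q := pathToList_comp' p q

/-- A path, as an element of the quotient of strings. -/
def strOf {x y : HoVert X} (p : Quiver.Path x y) : Quot (StrRel X) :=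
  Quot.mk _ ⟨x, y, pathToList p, pathToList_chain p⟩

lemma mk_congr {x y : X _⦋0⦌} {l l' : List (X _⦋1⦌)} (e : l = l')
    (h : EdgeChain X x y l) (h' : EdgeChain X x y l') :
    Quot.mk (StrRel X) ⟨x, y, l, h⟩ = Quot.mk (StrRel X) ⟨x, y, l', h'⟩ := by
  subst e; rfl

lemma strOf_sound {x y : Paths (HoVert X)} {p q : x ⟶ y}
    (hpq : HomRel.CompClosure (HoRel X) p q) : strOf p = strOf q := by
  cases hpq with
  | intro _ _ u m₁ m₂ w hr =>
    cases hr with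
    | tri f g h σ hf hg hh =>
        have e1 : pathToList (u ≫ (f.toPath ≫ g.toPath) ≫ w) =
            pathToList u ++ f.1 :: g.1 :: pathToList w := by
          rw [pathToList_comp, pathToList_comp]; erw [pathToList_comp, pathToList_toPath, pathToList_toPath]; rfl
        have e2 : pathToList (u ≫ h.toPath ≫ w) =
            pathToList u ++ h.1 :: pathToList w := by
          rw [pathToList_comp, pathToList_comp]; erw [pathToList_toPath]; rfl
        refine (mk_congr e1 _ (e1 ▸ pathToList_chain _)).trans
          (Eq.trans (Quot.sound (StrRel.tri x y (pathToList u) (pathToList w)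
            f.1 g.1 h.1 σ hf hg hh _ (e2 ▸ pathToList_chain _)))
          (mk_congr e2 _ _).symm)
    | degen a f hf =>
        rename_i a
        have e1 : pathToList (u ≫ f.toPath ≫ w) =
            pathToList u ++ ((X.σ 0 a) :: pathToList w : List (X _⦋1⦌)) := by
          simp [pathToList_comp, hf]; exact congrArg (· ++ pathToList w) (pathToList_toPath f)
        have e2 : pathToList (u ≫ 𝟙 ((Paths.of (V := HoVert X)).obj a) ≫ w) =
            pathToList u ++ pathToList w := by
          simp [pathToList_comp]; exact congrArg pathToList (Category.id_comp w)
        refine (mk_congr e1 _ (e1 ▸ pathToList_chain _)).trans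
          (Eq.trans (Quot.sound (StrRel.degen x y a (pathToList u) (pathToList w)
            _ (e2 ▸ pathToList_chain _)))
          (mk_congr e2 _ _).symm)

/-- The map from morphisms of `ho(X)` to the quotient of strings. -/
def G : (Σ a b : HoCat X, a ⟶ b) → Quot (StrRel X) :=
  fun s => Quot.lift strOf (fun _ _ h => strOf_sound h) s.2.2

lemma pathToList_toHom : ∀ (l : List (X _⦋1⦌)) {x y : HoVert X} (h : EdgeChain X x y l),
    pathToList (toHom l h) = l
  | [], _, _, h => by subst h; exact pathToList_id
  | e :: l, _, _, h => by
      show pathToList ((edge e h.1 rfl).toPath ≫ toHom l h.2) = e :: l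
      erw [pathToList_comp, pathToList_toHom l h.2, pathToList_toPath]
      rfl

lemma toHom_pathToList : ∀ {x y : HoVert X} (p : Quiver.Path x y) {l : List (X _⦋1⦌)}
    (hl : pathToList p = l) (h : EdgeChain X x y l), toHom l h = p
  | _, _, .nil, l, hl, h => by
      obtain rfl : l = [] := by rw [← hl, pathToList_nil]
      rw [toHom_nil]; exact rfl
  | _, _, .cons p e, l, hl, h => by
      obtain rfl : l = pathToList p ++ [e.1] := by rw [← hl, pathToList_cons]
      rw [toHom_append (pathToList p) (pathToList_chain p) (chain_single e) h,
        toHom_pathToList p rfl (pathToList_chain p)]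
      show p ≫ (edge e.1 e.2.1 rfl).toPath ≫ toHom [] e.2.2 = _
      erw [toPath_congr rfl e.2.2 e.1 e.2.1 rfl e.2.1 e.2.2,
        toHom_congr_src e.2.2 [] e.2.2 rfl, toHom_nil]
      simp only [eqToHom_refl, Category.id_comp, Category.comp_id, Category.assoc,
        eqToHom_trans]
      exact (congrArg _ ((Category.assoc _ _ _).trans ((congrArg _ ((eqToHom_trans _ _).trans (eqToHom_refl _ _))).trans (Category.comp_id _)))).trans rfl

end StmtAux
/-- The set of morphisms of the homotopy category `ho(X)` of a simplicial set `X` is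
in bijection with the quotient of the set of composable strings of edges of `X` by the
equivalence relation generated by composition along `2`-simplices and deletion of
degenerate edges. -/



theorem stmt_8 :
    Nonempty (Quot (StrRel X) ≃ Σ a b : HoCat X, a ⟶ b) := by
  refine ⟨⟨StmtAux.F, StmtAux.G, ?_, ?_⟩⟩
  · intro s
    induction s using Quot.ind with
    | _ s =>
      obtain ⟨x, y, l, h⟩ := s
      exact StmtAux.mk_congr (StmtAux.pathToList_toHom l h) _ _
  · rintro ⟨⟨a⟩, ⟨b⟩, φ⟩
    obtain ⟨p⟩ := φ
    exact StmtAux.sigma_congr (congrArg (Quot.mk _) (StmtAux.toHom_pathToList p rfl _))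
end

section
/- Let f : X → X' be a morphism of right fibrations over a common base Y of simplicial spaces (i.e. p : X → Y and p' : X' → Y are right fibrations and p' ∘ f = p). Then f is an equivalence if and only if the map f₀ : X₀ → X'₀ on zero-simplices is an equivalence. -/
open CategoryTheory CategoryTheory.Limits Simplicial Opposite

variable {C : Type*} [Category C]

/-- A map `p : X ⟶ Y` of simplicial objects is a right fibration if for all `n ≥ 1`
the square formed by `d₀ : Xₙ ⟶ Xₙ₋₁`, `d₀ : Yₙ ⟶ Yₙ₋₁` and the components of `p`
is a pullback square. -/
def IsRightFibration {X Y : SimplicialObject C} (p : X ⟶ Y) : Prop :=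
  ∀ n : ℕ, IsPullback (X.δ (0 : Fin (n + 2)))
    (p.app (op (SimplexCategory.mk (n + 1)))) (p.app (op (SimplexCategory.mk n)))
    (Y.δ (0 : Fin (n + 2)))

/-- A morphism `f : X ⟶ X'` of right fibrations over a common base `Y` is an
equivalence if and only if it is an equivalence on zero-simplices. -/
theorem stmt_9 {X X' Y : SimplicialObject C} (p : X ⟶ Y) (p' : X' ⟶ Y)
    (hp : IsRightFibration p) (hp' : IsRightFibration p')
    (f : X ⟶ X') (hf : f ≫ p' = p) :
    IsIso f ↔ IsIso (f.app (op (SimplexCategory.mk 0))) := by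
  constructor
  · intro h
    infer_instance
  · intro h0
    have key : ∀ n : ℕ, IsIso (f.app (op (SimplexCategory.mk n))) := by
      intro n
      induction n with
      | zero => exact h0
      | succ n ih =>
        -- naturality of f for δ 0
        have nat : X.δ (0 : Fin (n + 2)) ≫ f.app (op (SimplexCategory.mk n)) =
            f.app (op (SimplexCategory.mk (n + 1))) ≫ X'.δ (0 : Fin (n + 2)) := by
          simpa only [SimplicialObject.δ] using f.naturality (SimplexCategory.δ (0 : Fin (n + 2))).op
        have hfn : f.app (op (SimplexCategory.mk n)) ≫ p'.app (op (SimplexCategory.mk n)) =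
            p.app (op (SimplexCategory.mk n)) := by
          rw [← hf]; rfl
        have hfn1 : f.app (op (SimplexCategory.mk (n + 1))) ≫
            p'.app (op (SimplexCategory.mk (n + 1))) =
            p.app (op (SimplexCategory.mk (n + 1))) := by
          rw [← hf]; rfl
        -- the square given by f.app n, p.app n, p'.app n, 𝟙 is a pullback
        have sq : CommSq (f.app (op (SimplexCategory.mk n))) (p.app (op (SimplexCategory.mk n)))
            (p'.app (op (SimplexCategory.mk n))) (𝟙 _) :=
          ⟨by rw [hfn, Category.comp_id]⟩
        have right : IsPullback (f.app (op (SimplexCategory.mk n)))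
            (p.app (op (SimplexCategory.mk n))) (p'.app (op (SimplexCategory.mk n))) (𝟙 _) :=
          IsPullback.of_horiz_isIso sq
        have Q : IsPullback (X.δ (0 : Fin (n + 2)) ≫ f.app (op (SimplexCategory.mk n)))
            (p.app (op (SimplexCategory.mk (n + 1)))) (p'.app (op (SimplexCategory.mk n)))
            (Y.δ (0 : Fin (n + 2))) := by
          simpa using (hp n).paste_horiz right
        -- construct the inverse of f.app (n+1) using Q
        have w : X'.δ (0 : Fin (n + 2)) ≫ p'.app (op (SimplexCategory.mk n)) =
            p'.app (op (SimplexCategory.mk (n + 1))) ≫ Y.δ (0 : Fin (n + 2)) := (hp' n).w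
        refine ⟨Q.lift (X'.δ (0 : Fin (n + 2))) (p'.app (op (SimplexCategory.mk (n + 1)))) w,
          ?_, ?_⟩
        · apply Q.hom_ext
          · rw [Category.assoc, Q.lift_fst, Category.id_comp]; exact nat.symm
          · rw [Category.assoc, Q.lift_snd, Category.id_comp, hfn1]
        · apply (hp' n).hom_ext
          · rw [Category.assoc, ← nat, Q.lift_fst, Category.id_comp]
          · rw [Category.assoc, hfn1, Q.lift_snd, Category.id_comp]
    have : ∀ Δ : SimplexCategoryᵒᵖ, IsIso (f.app Δ) := by
      intro Δ
      have := key Δ.unop.len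
      rwa [SimplexCategory.mk_len, op_unop] at this
    exact NatIso.isIso_of_isIso_app f
end

section
/- Equifibered morphisms of commutative monoids form the right class of a factorization system on commutative monoids, and are stable under base change and composition; moreover, if f : M → N is equifibered and N is a free commutative monoid, then M is free. -/
/-- A map of commutative monoids (in `Set`) is equifibered if the square formed by
the addition maps and `f × f`, `f` is a pullback of sets. -/
def Equifibered {M N : Type*} [AddCommMonoid M] [AddCommMonoid N] (f : M →+ N) : Prop :=
  ∀ (m : M) (n₁ n₂ : N), f m = n₁ + n₂ →
    ∃! p : M × M, p.1 + p.2 = m ∧ f p.1 = n₁ ∧ f p.2 = n₂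

/-- `l` is left orthogonal to all equifibered maps: unique lifts exist in every
commutative square against an equifibered map. -/
def LeftOrthToEquifibered {M P : Type} [AddCommMonoid M] [AddCommMonoid P]
    (l : M →+ P) : Prop :=
  ∀ {A B : Type} [AddCommMonoid A] [AddCommMonoid B] (r : A →+ B), Equifibered r →
    ∀ (u : M →+ A) (v : P →+ B), v.comp l = r.comp u →
      ∃! d : P →+ A, d.comp l = u ∧ r.comp d = v

/-- The pullback of commutative monoids `M ×_N P`, as a submonoid of `M × P`. -/
def pullbackMonoid {M N P : Type} [AddCommMonoid M] [AddCommMonoid N] [AddCommMonoid P]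
    (f : M →+ N) (g : P →+ N) : AddSubmonoid (M × P) where
  carrier := {q | f q.1 = g q.2}
  zero_mem' := by simp
  add_mem' := by intro a b ha hb; simp only [Set.mem_setOf_eq, Prod.fst_add, Prod.snd_add,
    map_add] at *; rw [ha, hb]

/-- A commutative monoid is free if it is isomorphic to a monoid of multisets. -/
def IsFreeCommMonoid (M : Type) [AddCommMonoid M] : Prop :=
  ∃ S : Type, Nonempty (M ≃+ Multiset S)

lemma equif_inj {M N : Type*} [AddCommMonoid M] [AddCommMonoid N] {f : M →+ N}
    (hf : Equifibered f) : Function.Injective f := by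
  intro a b hab
  obtain ⟨p, _, hup⟩ := hf (a + b) (f a) (f b) (by rw [map_add])
  have h1 : ((a, b) : M × M) = p := hup (a, b) ⟨rfl, rfl, rfl⟩
  have h2 : ((b, a) : M × M) = p := hup (b, a) ⟨add_comm b a, hab.symm, hab⟩
  exact congrArg Prod.fst (h1.trans h2.symm)

lemma equif_face {M N : Type*} [AddCommMonoid M] [AddCommMonoid N] {f : M →+ N}
    (hf : Equifibered f) {n₁ n₂ : N} (h : ∃ m, f m = n₁ + n₂) :
    (∃ m, f m = n₁) ∧ (∃ m, f m = n₂) := by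
  obtain ⟨m, hm⟩ := h
  obtain ⟨p, ⟨_, h1, h2⟩, _⟩ := hf m n₁ n₂ hm
  exact ⟨⟨p.1, h1⟩, ⟨p.2, h2⟩⟩

lemma equif_of {M N : Type*} [AddCommMonoid M] [AddCommMonoid N] {f : M →+ N}
    (hinj : Function.Injective f)
    (hface : ∀ n₁ n₂ : N, (∃ m, f m = n₁ + n₂) → (∃ m, f m = n₁) ∧ (∃ m, f m = n₂)) :
    Equifibered f := by
  intro m n₁ n₂ h
  obtain ⟨⟨m₁, h₁⟩, ⟨m₂, h₂⟩⟩ := hface n₁ n₂ ⟨m, h⟩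
  refine ⟨(m₁, m₂), ⟨hinj (by rw [map_add, h₁, h₂, h]), h₁, h₂⟩, ?_⟩
  rintro ⟨q₁, q₂⟩ ⟨hq, hq1, hq2⟩
  exact Prod.ext (hinj (hq1.trans h₁.symm)) (hinj (hq2.trans h₂.symm))

/-- Equifibered morphisms of commutative monoids form the right class of a
factorization system: they are stable under composition and base change, every map
factors as a map left orthogonal to all equifibered maps followed by an equifibered
map; moreover an equifibered map with free target has free source. -/
theorem stmt_13 :
    (∀ {M N P : Type} [AddCommMonoid M] [AddCommMonoid N] [AddCommMonoid P]
      (f : M →+ N) (g : N →+ P), Equifibered f → Equifibered g → Equifibered (g.comp f)) ∧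
    (∀ {M N P : Type} [AddCommMonoid M] [AddCommMonoid N] [AddCommMonoid P]
      (f : M →+ N) (g : P →+ N), Equifibered f →
        Equifibered ((AddMonoidHom.snd M P).comp (pullbackMonoid f g).subtype)) ∧
    (∀ {M N : Type} [AddCommMonoid M] [AddCommMonoid N] (f : M →+ N),
      ∃ (P : Type) (_ : AddCommMonoid P) (l : M →+ P) (r : P →+ N),
        r.comp l = f ∧ LeftOrthToEquifibered l ∧ Equifibered r) ∧
    (∀ {M N : Type} [AddCommMonoid M] [AddCommMonoid N] (f : M →+ N),
      Equifibered f → IsFreeCommMonoid N → IsFreeCommMonoid M) := by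
  refine ⟨?_, ?_, ?_, ?_⟩
  · -- composition
    intro M N P _ _ _ f g hf hg
    refine equif_of ((equif_inj hg).comp (equif_inj hf)) ?_
    intro n₁ n₂ ⟨m, hm⟩
    obtain ⟨⟨p₁, hp₁⟩, ⟨p₂, hp₂⟩⟩ := equif_face hg ⟨f m, hm⟩
    have hsum : p₁ + p₂ = f m := equif_inj hg (by rw [map_add, hp₁, hp₂, ← hm]; rfl)
    obtain ⟨⟨m₁, hm₁⟩, ⟨m₂, hm₂⟩⟩ := equif_face hf ⟨m, hsum.symm⟩
    exact ⟨⟨m₁, by simp [AddMonoidHom.comp_apply, hm₁, hp₁]⟩,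
           ⟨m₂, by simp [AddMonoidHom.comp_apply, hm₂, hp₂]⟩⟩
  · -- base change
    intro M N P _ _ _ f g hf
    set π := (AddMonoidHom.snd M P).comp (pullbackMonoid f g).subtype with hπ
    have hπval : ∀ q : (pullbackMonoid f g), π q = (q : M × P).2 := fun _ => rfl
    refine equif_of ?_ ?_
    · intro a b hab
      have h2 : (a : M × P).2 = (b : M × P).2 := hab
      have ha : f (a : M × P).1 = g (a : M × P).2 := a.2
      have hb : f (b : M × P).1 = g (b : M × P).2 := b.2
      have h1 : (a : M × P).1 = (b : M × P).1 :=
        equif_inj hf (by rw [ha, hb, h2])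
      exact Subtype.ext (Prod.ext h1 h2)
    · intro p₁ p₂ ⟨q, hq⟩
      have hq2 : (q : M × P).2 = p₁ + p₂ := hq
      have hfq : f (q : M × P).1 = g p₁ + g p₂ := by rw [q.2, hq2, map_add]
      obtain ⟨r, ⟨_, h1, h2⟩, _⟩ := hf (q : M × P).1 (g p₁) (g p₂) hfq
      exact ⟨⟨⟨(r.1, p₁), h1⟩, rfl⟩, ⟨⟨(r.2, p₂), h2⟩, rfl⟩⟩
  · -- factorization
    intro M N _ _ f
    classical
    let R : AddSubmonoid N :=
      { carrier := {n | ∃ n' m, f m = n + n'}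
        zero_mem' := ⟨0, 0, by simp⟩
        add_mem' := by
          rintro a b ⟨a', ma, ha⟩ ⟨b', mb, hb⟩
          exact ⟨a' + b', ma + mb, by rw [map_add, ha, hb]; abel⟩ }
    have hmem : ∀ m : M, f m ∈ R := fun m => ⟨0, m, by simp⟩
    let l : M →+ R := f.codRestrict R hmem
    refine ⟨R, inferInstance, l, R.subtype, by ext m; rfl, ?_, ?_⟩
    · -- left orthogonality
      intro A B _ _ rr hrr u v hsq
      have hsq' : ∀ m, v (l m) = rr (u m) := fun m => DFunLike.congr_fun hsq m
      have key : ∀ p : R, ∃ a, rr a = v p := by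
        rintro ⟨n, n', m, hm⟩
        have hn' : n' ∈ R := ⟨n, m, by rw [hm, add_comm]⟩
        set p₁ : R := ⟨n, n', m, hm⟩
        set p₂ : R := ⟨n', hn'⟩
        have hpl : p₁ + p₂ = l m := Subtype.ext hm.symm
        have hv : rr (u m) = v p₁ + v p₂ := by rw [← map_add, hpl, hsq' m]
        exact (equif_face hrr ⟨u m, hv⟩).1
      choose dd hdd using key
      have hrrinj := equif_inj hrr
      let d : R →+ A :=
        { toFun := dd
          map_zero' := hrrinj (by rw [hdd, map_zero, map_zero])
          map_add' := fun x y => hrrinj (by rw [hdd, map_add, map_add, hdd, hdd]) }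
      refine ⟨d, ⟨?_, ?_⟩, ?_⟩
      · ext m
        apply hrrinj
        show rr (dd (l m)) = rr (u m)
        rw [hdd, hsq' m]
      · ext p
        exact hdd p
      · rintro d' ⟨-, h2⟩
        ext p
        apply hrrinj
        show rr (d' p) = rr (dd p)
        rw [hdd]
        exact DFunLike.congr_fun h2 p
    · -- R.subtype is equifibered
      refine equif_of Subtype.val_injective ?_
      rintro n₁ n₂ ⟨⟨x, x', m, hx⟩, hxe⟩
      have hxe' : x = n₁ + n₂ := hxe
      have h₁ : n₁ ∈ R := ⟨n₂ + x', m, by rw [hx, hxe']; abel⟩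
      have h₂ : n₂ ∈ R := ⟨n₁ + x', m, by rw [hx, hxe']; abel⟩
      exact ⟨⟨⟨n₁, h₁⟩, rfl⟩, ⟨⟨n₂, h₂⟩, rfl⟩⟩
  · -- free target implies free source
    rintro M N _ _ f hf ⟨S, ⟨e⟩⟩
    classical
    let F : M →+ Multiset S := (e : N →+ Multiset S).comp f
    have hFval : ∀ m, F m = e (f m) := fun _ => rfl
    have hFinj : Function.Injective F := fun a b h =>
      equif_inj hf (e.injective (by rw [← hFval, ← hFval, h]))
    have hface : ∀ n₁ n₂ : Multiset S, (∃ m, F m = n₁ + n₂) →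
        (∃ m, F m = n₁) ∧ (∃ m, F m = n₂) := by
      rintro n₁ n₂ ⟨m, hm⟩
      have hfm : f m = e.symm n₁ + e.symm n₂ := by
        apply e.injective
        rw [map_add, e.apply_symm_apply, e.apply_symm_apply, ← hFval, hm]
      obtain ⟨p, ⟨_, h1, h2⟩, _⟩ := hf m _ _ hfm
      exact ⟨⟨p.1, by rw [hFval, h1, e.apply_symm_apply]⟩,
             ⟨p.2, by rw [hFval, h2, e.apply_symm_apply]⟩⟩
    let S' := {s : S // ∃ m, F m = ({s} : Multiset S)}
    have hsel : ∀ s : S', ∃ m, F m = ({s.val} : Multiset S) := fun s => s.2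
    choose φ hφ using hsel
    let Φ : Multiset S' →+ M :=
      { toFun := fun t => (t.map φ).sum
        map_zero' := rfl
        map_add' := fun a b => by rw [Multiset.map_add, Multiset.sum_add] }
    have hΦval : ∀ t, Φ t = (t.map φ).sum := fun _ => rfl
    have hFΦ : ∀ t, F (Φ t) = t.map Subtype.val := by
      intro t
      induction t using Multiset.induction with
      | empty => simp [hΦval]
      | cons a s ih =>
        rw [hΦval, Multiset.map_cons, Multiset.sum_cons, map_add, hφ a, ← hΦval, ih,
          Multiset.map_cons, ← Multiset.singleton_add]
    have hinj : Function.Injective Φ := fun a b h =>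
      Multiset.map_injective Subtype.val_injective (by rw [← hFΦ, ← hFΦ, h])
    have hsurj : Function.Surjective Φ := by
      intro m
      have hmem : ∀ x ∈ F m, ∃ m', F m' = ({x} : Multiset S) := by
        intro x hx
        exact (hface {x} ((F m).erase x) ⟨m, by
          rw [Multiset.singleton_add, Multiset.cons_erase hx]⟩).1
      let t : Multiset S' := (F m).attach.map (fun x => ⟨x.val, hmem x.val x.2⟩)
      refine ⟨t, hFinj ?_⟩
      rw [hFΦ]
      show ((F m).attach.map (fun x => (⟨x.val, hmem x.val x.2⟩ : S'))).map Subtype.val = F m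
      rw [Multiset.map_map]
      exact (F m).attach_map_val
    exact ⟨S', ⟨(AddEquiv.ofBijective Φ ⟨hinj, hsurj⟩).symm⟩⟩
end

section
/- For a 1-category version of Lemma 2.11: in the category of sets, a pullback-stable class argument shows that for commutative monoids in sets, if f : M → N is equifibered, then for any two elements m, m' ∈ M with f(m) + f(m') = f(m''), there exist unique m₁, m₂ ∈ M with m₁ + m₂ = m'' and f(m₁) = f(m), f(m₂) = f(m'). In particular, an equifibered map into a free commutative monoid ℕ^{(S)} exhibits its source as free on the preimage of the generators. -/
def degHom (S : Type) : (S →₀ ℕ) →+ ℕ where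
  toFun g := g.sum fun _ k => k
  map_zero' := by simp
  map_add' a b := by
    show (a + b).sum (fun _ k => k) = a.sum (fun _ k => k) + b.sum (fun _ k => k)
    exact Finsupp.sum_add_index' (fun _ => rfl) (fun _ _ _ => rfl)

lemma degHom_single {S : Type} (s : S) (n : ℕ) : degHom S (Finsupp.single s n) = n := by
  show (Finsupp.single s n).sum (fun _ k => k) = n
  exact Finsupp.sum_single_index rfl

lemma degHom_eq_zero {S : Type} {g : S →₀ ℕ} (h : degHom S g = 0) : g = 0 := by
  ext s
  simp only [Finsupp.coe_zero, Pi.zero_apply]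
  by_contra hs
  have hmem : s ∈ g.support := Finsupp.mem_support_iff.mpr (by simpa using hs)
  have h' : g.sum (fun _ k => k) = 0 := h
  rw [Finsupp.sum] at h'
  have hle : g s ≤ ∑ i ∈ g.support, g i :=
    Finset.single_le_sum (f := fun i => g i) (fun i _ => Nat.zero_le _) hmem
  omega

lemma msum_apply {S : Type} (l : Multiset (S →₀ ℕ)) (s : S) :
    l.sum s = (l.map (fun g => g s)).sum := by
  induction l using Multiset.induction with
  | empty => simp
  | cons a l ih => simp [ih]

lemma equi_zero {M N : Type} [AddCommMonoid M] [AddCommMonoid N] (f : M →+ N)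
    (h : Equifibered f) {m : M} (hm : f m = 0) : m = 0 := by
  obtain ⟨p, _, hu⟩ := h m 0 0 (by rw [hm, add_zero])
  have h1 := hu (0, m) ⟨by simp, by simp, hm⟩
  have h2 := hu (m, 0) ⟨by simp, hm, by simp⟩
  exact (congrArg Prod.fst (h1.trans h2.symm)).symm

/-- 1-categorical version: if `f : M → N` is an equifibered map of commutative monoids
in `Set`, then for any `m, m', m'' ∈ M` with `f m + f m' = f m''` there are unique
`m₁, m₂ ∈ M` with `m₁ + m₂ = m''`, `f m₁ = f m`, `f m₂ = f m'`.  In particular, an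
equifibered map into a free commutative monoid `ℕ^{(S)}` exhibits its source as free
on the preimage of the generators: the canonical summation map from multisets over the
preimage of the generators is a bijection. -/
theorem stmt_14 :
    (∀ {M N : Type} [AddCommMonoid M] [AddCommMonoid N] (f : M →+ N),
      Equifibered f → ∀ m m' m'' : M, f m + f m' = f m'' →
        ∃! p : M × M, p.1 + p.2 = m'' ∧ f p.1 = f m ∧ f p.2 = f m') ∧
    (∀ {M : Type} [AddCommMonoid M] (S : Type) (f : M →+ (S →₀ ℕ)),
      Equifibered f →
        Function.Bijective
          (fun t : Multiset {m : M // ∃ s : S, f m = Finsupp.single s 1} =>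
            (t.map Subtype.val).sum)) := by
  constructor
  · intro M N _ _ f hf m m' m'' hsum
    exact hf m'' (f m) (f m') hsum.symm
  · intro M _ S f hf
    classical
    set G := {m : M // ∃ s : S, f m = Finsupp.single s 1} with hG
    have hdeg_sum : ∀ t : Multiset G, degHom S (f (t.map Subtype.val).sum) = Multiset.card t := by
      intro t
      induction t using Multiset.induction with
      | empty => simp
      | cons g t ih =>
        obtain ⟨s, hs⟩ := g.2
        simp only [Multiset.map_cons, Multiset.sum_cons, Multiset.card_cons, map_add]
        rw [hs, degHom_single, ih]
        omega
    constructor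
    · -- injectivity
      intro t₁ t₂ heq
      simp only at heq
      induction t₁ using Multiset.induction generalizing t₂ with
      | empty =>
        have h0 : degHom S (f (t₂.map Subtype.val).sum) = 0 := by
          rw [← heq]; simp
        rw [hdeg_sum t₂] at h0
        exact (Multiset.card_eq_zero.mp h0).symm
      | cons g t ih =>
        obtain ⟨s, hs⟩ := g.2
        have hm1 : ((g ::ₘ t).map Subtype.val).sum = g.val + (t.map Subtype.val).sum := by simp
        have hfm : f ((g ::ₘ t).map Subtype.val).sum
            = Finsupp.single s 1 + f (t.map Subtype.val).sum := by
          rw [hm1, map_add, hs]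
        have happ : ∀ u : Multiset G,
            f ((u.map Subtype.val).sum) s = (u.map (fun g : G => f g.val s)).sum := by
          intro u
          rw [map_multiset_sum, msum_apply, Multiset.map_map, Multiset.map_map]
          rfl
        have hpos : 0 < f ((t₂.map Subtype.val).sum) s := by
          rw [← heq, hfm]
          simp
        have hex : ∃ g' : G, g' ∈ t₂ ∧ f g'.val = Finsupp.single s 1 := by
          by_contra hno
          push_neg at hno
          rw [happ t₂] at hpos
          have : (t₂.map (fun g : G => f g.val s)).sum = 0 := by
            apply Multiset.sum_eq_zero
            intro x hx
            obtain ⟨g', hg', hgx⟩ := Multiset.mem_map.mp hx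
            obtain ⟨s', hs'⟩ := g'.2
            have hne : s' ≠ s := by
              rintro rfl; exact hno g' hg' hs'
            rw [← hgx, hs', Finsupp.single_apply_eq_zero]
            tauto
          omega
        obtain ⟨g', hg't, hg'⟩ := hex
        have hsplit : (t₂.map Subtype.val).sum
            = g'.val + ((t₂.erase g').map Subtype.val).sum := by
          conv_lhs => rw [← Multiset.cons_erase hg't]
          simp
        have hrest : f ((t₂.erase g').map Subtype.val).sum = f (t.map Subtype.val).sum := by
          have key : Finsupp.single s 1 + f ((t₂.erase g').map Subtype.val).sum
              = Finsupp.single s 1 + f (t.map Subtype.val).sum := by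
            rw [← hg', ← map_add, ← hsplit, ← heq, hfm, hg']
          exact add_left_cancel key
        obtain ⟨p, _, hu⟩ := hf ((g ::ₘ t).map Subtype.val).sum
          (Finsupp.single s 1) (f (t.map Subtype.val).sum) hfm
        have h1 := hu (g.val, (t.map Subtype.val).sum) ⟨hm1.symm, hs, rfl⟩
        have h2 := hu (g'.val, ((t₂.erase g').map Subtype.val).sum)
          ⟨by rw [heq, hsplit], hg', hrest⟩
        have hpq := h1.trans h2.symm
        have hgg' : g = g' := Subtype.ext (congrArg Prod.fst hpq)
        have hsums : (t.map Subtype.val).sum = ((t₂.erase g').map Subtype.val).sum :=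
          congrArg Prod.snd hpq
        rw [ih hsums, hgg', Multiset.cons_erase hg't]
    · -- surjectivity
      intro m
      suffices h : ∀ n (m : M), degHom S (f m) = n →
          ∃ t : Multiset G, (t.map Subtype.val).sum = m by
        exact h (degHom S (f m)) m rfl
      intro n
      induction n using Nat.strong_induction_on with
      | _ n ih =>
        intro m hdm
        rcases Nat.eq_zero_or_pos n with rfl | hn
        · exact ⟨0, by simp [(equi_zero f hf (degHom_eq_zero hdm)).symm]⟩
        · have hne : f m ≠ 0 := by
            intro h0; rw [h0, map_zero] at hdm; omega
          obtain ⟨s, hs⟩ := Finsupp.support_nonempty_iff.mpr hne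
          have hs1 : 1 ≤ f m s := Nat.one_le_iff_ne_zero.mpr (Finsupp.mem_support_iff.mp hs)
          have hle : Finsupp.single s 1 ≤ f m := Finsupp.single_le_iff.mpr hs1
          have hdecomp : f m = Finsupp.single s 1 + (f m - Finsupp.single s 1) :=
            (add_tsub_cancel_of_le hle).symm
          obtain ⟨⟨m₁, m₂⟩, ⟨hp1, hp2, hp3⟩, _⟩ := hf m _ _ hdecomp
          have hdm2 : degHom S (f m₂) < n := by
            have hq : degHom S (f m) = degHom S (Finsupp.single s 1) + degHom S (f m₂) := by
              rw [hdecomp, map_add, hp3]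
            rw [hdm, degHom_single] at hq
            omega
          obtain ⟨t, ht⟩ := ih _ hdm2 m₂ rfl
          exact ⟨⟨m₁, s, hp2⟩ ::ₘ t, by simp [ht, hp1]⟩
end
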